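/- arXiv:2508.01363 — 4 statements merged into one kernel-verified Lean document; each statement's English description precedes it below -/
import Mathlib

section
/- Let (X,T) be an NDS, let Z ⊂ X_0 and let f be a potential. Then Q_low(T,f,Z) ≤ P_low(T,f,Z) and Q_up(T,f,Z) ≤ P_up(T,f,Z). If moreover f is equicontinuous, then Q_low(T,f,Z) = P_low(T,f,Z) and Q_up(T,f,Z) = P_up(T,f,Z); that is, the lower and upper topological pressures P_L(T,f,Z) and P_U(T,f,Z) exist. -/
open Filter Set
open scoped ENNReal NNReal

noncomputable section

namespace NDS

variable {X : ℕ → Type*}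

/-- The orbit maps `T_k^j : X k → X (k+j)` of a nonautonomous system. -/
def iterFrom (T : ∀ k, X k → X (k + 1)) (k : ℕ) : ∀ j, X k → X (k + j)
  | 0 => fun x => x
  | j + 1 => fun x => T (k + j) (iterFrom T k j x)

/-- The orbit maps `T^j = T_{j-1} ∘ ⋯ ∘ T_0 : X 0 → X j`. -/
def iter (T : ∀ k, X k → X (k + 1)) : ∀ j, X 0 → X j
  | 0 => fun x => x
  | j + 1 => fun x => T j (iter T j x)

variable [∀ k, MetricSpace (X k)]

/-- The `n`-th Bowen metric on `X 0`:  `d_n^T(x,y) = max_{0 ≤ j ≤ n-1} d_j (T^j x) (T^j y)`. -/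
def bowenDist (T : ∀ k, X k → X (k + 1)) (n : ℕ) (x y : X 0) : ℝ :=
  (((Finset.range n).sup fun j => nndist (iter T j x) (iter T j y) : ℝ≥0) : ℝ)

/-- The open Bowen ball `B_n^T(x, ε)`. -/
def bowenBall (T : ∀ k, X k → X (k + 1)) (n : ℕ) (x : X 0) (ε : ℝ) : Set (X 0) :=
  {y | bowenDist T n x y < ε}

/-- The closed Bowen ball `clB_n^T(x, ε)`. -/
def bowenClosedBall (T : ∀ k, X k → X (k + 1)) (n : ℕ) (x : X 0) (ε : ℝ) : Set (X 0) :=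
  {y | bowenDist T n x y ≤ ε}

/-- Birkhoff sums starting at level `k`:  `S_{k,n}^T f = Σ_{j<n} f_{k+j} ∘ T_k^j`. -/
def birkFrom (T : ∀ k, X k → X (k + 1)) (f : ∀ k, X k → ℝ) (k n : ℕ) (x : X k) : ℝ :=
  ∑ j ∈ Finset.range n, f (k + j) (iterFrom T k j x)

/-- Birkhoff sums `S_n^T f = Σ_{j<n} f_j ∘ T^j` on `X 0`. -/
def birk (T : ∀ k, X k → X (k + 1)) (f : ∀ k, X k → ℝ) (n : ℕ) (x : X 0) : ℝ :=
  ∑ j ∈ Finset.range n, f j (iter T j x)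

/-- A potential `f = {f_k}` is equicontinuous. -/
def EquicontPotential (f : ∀ k, X k → ℝ) : Prop :=
  ∀ ε : ℝ, 0 < ε → ∃ δ : ℝ, 0 < δ ∧
    ∀ k, ∀ x y : X k, dist x y < δ → |f k x - f k y| < ε

/-- The sequence of maps `T = {T_k}` is equicontinuous. -/
def EquicontMaps (T : ∀ k, X k → X (k + 1)) : Prop :=
  ∀ ε : ℝ, 0 < ε → ∃ δ : ℝ, 0 < δ ∧
    ∀ k, ∀ x y : X k, dist x y < δ → dist (T k x) (T k y) < ε

/-- `F` is an `(n,ε)`-spanning set for `Z`. -/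
def IsSpanning (T : ∀ k, X k → X (k + 1)) (n : ℕ) (ε : ℝ) (Z : Set (X 0))
    (F : Finset (X 0)) : Prop :=
  ∀ x ∈ Z, ∃ y ∈ F, bowenDist T n x y ≤ ε

/-- `E` is an `(n,ε)`-separated set for `Z`. -/
def IsSeparated (T : ∀ k, X k → X (k + 1)) (n : ℕ) (ε : ℝ) (Z : Set (X 0))
    (E : Finset (X 0)) : Prop :=
  ↑E ⊆ Z ∧ ∀ x ∈ E, ∀ y ∈ E, x ≠ y → ε < bowenDist T n x y

/-- The partition sum `Σ_{x ∈ F} e^{S_n^T f(x)}` (valued in `ℝ≥0∞`). -/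
def partSum (T : ∀ k, X k → X (k + 1)) (f : ∀ k, X k → ℝ) (n : ℕ) (F : Finset (X 0)) : ℝ≥0∞ :=
  ∑ x ∈ F, ENNReal.ofReal (Real.exp (birk T f n x))

/-- `Q_n(T,f,Z,ε)`, infimum over `(n,ε)`-spanning sets. -/
def Qn (T : ∀ k, X k → X (k + 1)) (f : ∀ k, X k → ℝ) (Z : Set (X 0)) (n : ℕ) (ε : ℝ) : ℝ≥0∞ :=
  ⨅ (F : Finset (X 0)) (_ : IsSpanning T n ε Z F), partSum T f n F

/-- `P_n(T,f,Z,ε)`, supremum over `(n,ε)`-separated sets. -/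
def Pn (T : ∀ k, X k → X (k + 1)) (f : ∀ k, X k → ℝ) (Z : Set (X 0)) (n : ℕ) (ε : ℝ) : ℝ≥0∞ :=
  ⨆ (E : Finset (X 0)) (_ : IsSeparated T n ε Z E), partSum T f n E

/-- `liminf_n (1/n) log u n` (in `EReal`). -/
def lowRate (u : ℕ → ℝ≥0∞) : EReal :=
  Filter.atTop.liminf fun n : ℕ => (((n : ℝ)⁻¹ : ℝ) : EReal) * ENNReal.log (u n)

/-- `limsup_n (1/n) log u n` (in `EReal`). -/
def upRate (u : ℕ → ℝ≥0∞) : EReal :=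
  Filter.atTop.limsup fun n : ℕ => (((n : ℝ)⁻¹ : ℝ) : EReal) * ENNReal.log (u n)

/-- Lower spanning topological pressure `Q_low(T,f,Z)`; the limit as `ε → 0` is realised as a
supremum over `ε > 0`, the quantity being monotone in `ε`. -/
def Qlow (T : ∀ k, X k → X (k + 1)) (f : ∀ k, X k → ℝ) (Z : Set (X 0)) : EReal :=
  ⨆ (ε : ℝ) (_ : 0 < ε), lowRate fun n => Qn T f Z n ε

/-- Upper spanning topological pressure `Q_up(T,f,Z)`. -/
def Qup (T : ∀ k, X k → X (k + 1)) (f : ∀ k, X k → ℝ) (Z : Set (X 0)) : EReal :=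
  ⨆ (ε : ℝ) (_ : 0 < ε), upRate fun n => Qn T f Z n ε

/-- Lower separated topological pressure `P_low(T,f,Z)`. -/
def Plow (T : ∀ k, X k → X (k + 1)) (f : ∀ k, X k → ℝ) (Z : Set (X 0)) : EReal :=
  ⨆ (ε : ℝ) (_ : 0 < ε), lowRate fun n => Pn T f Z n ε

/-- Upper separated topological pressure `P_up(T,f,Z)`. -/
def Pup (T : ∀ k, X k → X (k + 1)) (f : ∀ k, X k → ℝ) (Z : Set (X 0)) : EReal :=
  ⨆ (ε : ℝ) (_ : 0 < ε), upRate fun n => Pn T f Z n ε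

/-- The critical value `inf {s : M s = 0}` of a "measure profile" `M`, as an extended real. -/
def crit (M : ℝ → ℝ≥0∞) : EReal :=
  sInf (Real.toEReal '' {s : ℝ | M s = 0})

/-- The critical value `sup {s : M s = ∞}` of a "measure profile" `M`, as an extended real. -/
def critSup (M : ℝ → ℝ≥0∞) : EReal :=
  sSup (Real.toEReal '' {s : ℝ | M s = ⊤})

/-- A countable family of Bowen balls (recorded by their (center, order) data) which is an
`(N,ε)`-cover of `Z`. -/
def IsBowenCover (T : ∀ k, X k → X (k + 1)) (N : ℕ) (ε : ℝ) (Z : Set (X 0))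
    (C : Set (X 0 × ℕ)) : Prop :=
  C.Countable ∧ (∀ p ∈ C, N ≤ p.2) ∧ Z ⊆ ⋃ p ∈ C, bowenBall T p.2 p.1 ε

/-- A countable disjoint family of closed Bowen balls with centers in `Z` and orders `≥ N`:
an `(N,ε)`-packing of `Z`. -/
def IsBowenPacking (T : ∀ k, X k → X (k + 1)) (N : ℕ) (ε : ℝ) (Z : Set (X 0))
    (P : Set (X 0 × ℕ)) : Prop :=
  P.Countable ∧ (∀ p ∈ P, p.1 ∈ Z ∧ N ≤ p.2) ∧
    ∀ p ∈ P, ∀ q ∈ P, p ≠ q →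
      Disjoint (bowenClosedBall T p.2 p.1 ε) (bowenClosedBall T q.2 q.1 ε)

/-- `Σ_i exp (-n_i s + S_{n_i}^T f (x_i))` over a family of (center, order) pairs. -/
def ballSum (T : ∀ k, X k → X (k + 1)) (f : ∀ k, X k → ℝ) (s : ℝ) (C : Set (X 0 × ℕ)) : ℝ≥0∞ :=
  ∑' p : C, ENNReal.ofReal (Real.exp (-(p.1.2 : ℝ) * s + birk T f p.1.2 p.1.1))

/-- The Hausdorff-type pre-measure `M^s_{N,ε}(T,f,Z)`. -/
def bowenPreMeas (T : ∀ k, X k → X (k + 1)) (f : ∀ k, X k → ℝ) (Z : Set (X 0))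
    (s : ℝ) (N : ℕ) (ε : ℝ) : ℝ≥0∞ :=
  ⨅ (C : Set (X 0 × ℕ)) (_ : IsBowenCover T N ε Z C), ballSum T f s C

/-- `M^s_ε(T,f,Z) = lim_{N → ∞} M^s_{N,ε}(T,f,Z)` (an increasing limit, i.e. a supremum). -/
def bowenMeas (T : ∀ k, X k → X (k + 1)) (f : ∀ k, X k → ℝ) (Z : Set (X 0))
    (s : ℝ) (ε : ℝ) : ℝ≥0∞ :=
  ⨆ N : ℕ, bowenPreMeas T f Z s N ε

/-- `P^B(T,f,Z,ε)`: the critical value of `s ↦ M^s_ε(T,f,Z)`. -/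
def PBe (T : ∀ k, X k → X (k + 1)) (f : ∀ k, X k → ℝ) (Z : Set (X 0)) (ε : ℝ) : EReal :=
  crit fun s => bowenMeas T f Z s ε

/-- The Bowen (Pesin–Pitskel') topological pressure `P^B(T,f,Z)`; the limit as `ε → 0` is
realised as a supremum over `ε > 0` by monotonicity. -/
def PB (T : ∀ k, X k → X (k + 1)) (f : ∀ k, X k → ℝ) (Z : Set (X 0)) : EReal :=
  ⨆ (ε : ℝ) (_ : 0 < ε), PBe T f Z ε

/-- The packing pre-measure `𝒫^s_{N,ε}(T,f,Z)`. -/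
def packPre (T : ∀ k, X k → X (k + 1)) (f : ∀ k, X k → ℝ) (Z : Set (X 0))
    (s : ℝ) (N : ℕ) (ε : ℝ) : ℝ≥0∞ :=
  ⨆ (P : Set (X 0 × ℕ)) (_ : IsBowenPacking T N ε Z P), ballSum T f s P

/-- The packing content `𝒫^s_{∞,ε}(T,f,Z) = lim_{N→∞} 𝒫^s_{N,ε}` (a decreasing limit, i.e. an
infimum). -/
def packContent (T : ∀ k, X k → X (k + 1)) (f : ∀ k, X k → ℝ) (Z : Set (X 0))
    (s : ℝ) (ε : ℝ) : ℝ≥0∞ :=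
  ⨅ N : ℕ, packPre T f Z s N ε

/-- The packing measure `𝒫^s_ε(T,f,Z)`, obtained from the content by countable decompositions. -/
def packMeas (T : ∀ k, X k → X (k + 1)) (f : ∀ k, X k → ℝ) (Z : Set (X 0))
    (s : ℝ) (ε : ℝ) : ℝ≥0∞ :=
  ⨅ (D : ℕ → Set (X 0)) (_ : Z ⊆ ⋃ i, D i), ∑' i, packContent T f (D i) s ε

/-- `P^P(T,f,Z,ε)`: the critical value of `s ↦ 𝒫^s_ε(T,f,Z)`. -/
def PPe (T : ∀ k, X k → X (k + 1)) (f : ∀ k, X k → ℝ) (Z : Set (X 0)) (ε : ℝ) : EReal :=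
  crit fun s => packMeas T f Z s ε

/-- The packing topological pressure `P^P(T,f,Z)`. -/
def PP (T : ∀ k, X k → X (k + 1)) (f : ∀ k, X k → ℝ) (Z : Set (X 0)) : EReal :=
  ⨆ (ε : ℝ) (_ : 0 < ε), PPe T f Z ε

end NDS


section Aux

open NDS

variable {X : ℕ → Type*} [∀ k, MetricSpace (X k)]

lemma iter_cont (T : ∀ k, X k → X (k + 1)) (hT : ∀ k, Continuous (T k)) (j : ℕ) :
    Continuous (NDS.iter T j) := by
  induction j with
  | zero => exact continuous_id
  | succ j ih => exact (hT j).comp ih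

lemma bowenDist_self (T : ∀ k, X k → X (k + 1)) (n : ℕ) (x : X 0) :
    NDS.bowenDist T n x x = 0 := by
  simp [NDS.bowenDist]

lemma bowenDist_comm (T : ∀ k, X k → X (k + 1)) (n : ℕ) (x y : X 0) :
    NDS.bowenDist T n x y = NDS.bowenDist T n y x := by
  simp [NDS.bowenDist, nndist_comm]

lemma dist_iter_le (T : ∀ k, X k → X (k + 1)) {n j : ℕ} (h : j < n) (x y : X 0) :
    dist (NDS.iter T j x) (NDS.iter T j y) ≤ NDS.bowenDist T n x y := by
  rw [dist_nndist]
  exact_mod_cast Finset.le_sup (f := fun j => nndist (NDS.iter T j x) (NDS.iter T j y))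
    (Finset.mem_range.2 h)

lemma bowenDist_triangle (T : ∀ k, X k → X (k + 1)) (n : ℕ) (x y z : X 0) :
    NDS.bowenDist T n x z ≤ NDS.bowenDist T n x y + NDS.bowenDist T n y z := by
  unfold NDS.bowenDist
  rw [← NNReal.coe_add, NNReal.coe_le_coe]
  apply Finset.sup_le
  intro j hj
  exact le_trans (nndist_triangle _ (NDS.iter T j y) _)
    (add_le_add
      (Finset.le_sup (f := fun j => nndist (NDS.iter T j x) (NDS.iter T j y)) hj)
      (Finset.le_sup (f := fun j => nndist (NDS.iter T j y) (NDS.iter T j z)) hj))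

/-- Total boundedness of the Bowen metric: a finite `ε`-net exists. -/
lemma exists_net [∀ k, CompactSpace (X k)] (T : ∀ k, X k → X (k + 1))
    (hT : ∀ k, Continuous (T k)) (n : ℕ) {ε : ℝ} (hε : 0 < ε) :
    ∃ F : Finset (X 0), ∀ x : X 0, ∃ y ∈ F, NDS.bowenDist T n y x < ε := by
  set εn : ℝ≥0 := ⟨ε, hε.le⟩ with hεn
  have hcoe : (εn : ℝ) = ε := rfl
  have hU : ∀ y : X 0, IsOpen {x | NDS.bowenDist T n y x < ε} := by
    intro y
    have hset : {x | NDS.bowenDist T n y x < ε}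
        = ⋂ j ∈ Finset.range n, (NDS.iter T j) ⁻¹' (Metric.ball (NDS.iter T j y) ε) := by
      ext x
      have : NDS.bowenDist T n y x < ε ↔
          ((Finset.range n).sup fun j => nndist (NDS.iter T j y) (NDS.iter T j x)) < εn := by
        rw [NDS.bowenDist, ← hcoe, NNReal.coe_lt_coe]
      rw [Set.mem_setOf_eq, this, Finset.sup_lt_iff (by exact_mod_cast hε)]
      simp only [Set.mem_iInter, Set.mem_preimage, Metric.mem_ball]
      constructor
      · intro h j hj
        have := h j hj
        rw [← NNReal.coe_lt_coe, hcoe] at this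
        rw [dist_comm, dist_nndist]
        exact_mod_cast this
      · intro h j hj
        have := h j hj
        rw [dist_comm, dist_nndist] at this
        rw [← NNReal.coe_lt_coe, hcoe]
        exact_mod_cast this
    rw [hset]
    apply isOpen_biInter_finset
    intro j _
    exact (Metric.isOpen_ball).preimage (iter_cont T hT j)
  have hcov : (Set.univ : Set (X 0)) ⊆ ⋃ y : X 0, {x | NDS.bowenDist T n y x < ε} := by
    intro x _
    exact Set.mem_iUnion.2 ⟨x, by simpa [bowenDist_self] using hε⟩
  obtain ⟨t, ht⟩ := isCompact_univ.elim_finite_subcover _ hU hcov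
  refine ⟨t, fun x => ?_⟩
  have := ht (Set.mem_univ x)
  simpa using this

/-- Cardinality of separated sets is uniformly bounded. -/
lemma sep_card_bdd [∀ k, CompactSpace (X k)] (T : ∀ k, X k → X (k + 1))
    (hT : ∀ k, Continuous (T k)) (n : ℕ) {ε : ℝ} (hε : 0 < ε) (Z : Set (X 0)) :
    ∃ N : ℕ, ∀ E : Finset (X 0), NDS.IsSeparated T n ε Z E → E.card ≤ N := by
  classical
  obtain ⟨F, hF⟩ := exists_net T hT n (half_pos hε)
  refine ⟨F.card, fun E hE => ?_⟩
  choose g hgF hgd using hF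
  apply Finset.card_le_card_of_injOn g (fun x _ => hgF x)
  intro a ha b hb hab
  by_contra hne
  have hsep := hE.2 a (by exact_mod_cast ha) b (by exact_mod_cast hb) hne
  have h1 : NDS.bowenDist T n a b ≤ NDS.bowenDist T n a (g a) + NDS.bowenDist T n (g a) b :=
    bowenDist_triangle T n a (g a) b
  have h2 : NDS.bowenDist T n a (g a) < ε / 2 := by
    rw [bowenDist_comm]; exact hgd a
  have h3 : NDS.bowenDist T n (g a) b < ε / 2 := by
    rw [hab]; exact hgd b
  linarith

/-- A maximal separated set is spanning. -/
lemma exists_max_sep [∀ k, CompactSpace (X k)] (T : ∀ k, X k → X (k + 1))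
    (hT : ∀ k, Continuous (T k)) (n : ℕ) {ε : ℝ} (hε : 0 < ε) (Z : Set (X 0)) :
    ∃ E : Finset (X 0), NDS.IsSeparated T n ε Z E ∧ NDS.IsSpanning T n ε Z E := by
  classical
  obtain ⟨N, hN⟩ := sep_card_bdd T hT n hε Z
  set S : Set ℕ := {k | ∃ E : Finset (X 0), NDS.IsSeparated T n ε Z E ∧ E.card = k} with hS
  have h0 : 0 ∈ S := ⟨∅, ⟨by simp, by simp⟩, by simp⟩
  have hbdd : BddAbove S := ⟨N, fun k ⟨E, hE, hc⟩ => hc ▸ hN E hE⟩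
  obtain ⟨E, hE, hcard⟩ := Nat.sSup_mem ⟨0, h0⟩ hbdd
  refine ⟨E, hE, fun x hx => ?_⟩
  by_contra h
  push_neg at h
  have hxE : x ∉ E := by
    intro hxE
    have := h x hxE
    rw [bowenDist_self] at this
    exact absurd this (not_lt.2 hε.le)
  have hsep' : NDS.IsSeparated T n ε Z (insert x E) := by
    constructor
    · rw [Finset.coe_insert]
      exact Set.insert_subset hx hE.1
    · intro a ha b hb hab
      rcases Finset.mem_insert.1 ha with rfl | ha' <;>
        rcases Finset.mem_insert.1 hb with rfl | hb'
      · exact absurd rfl hab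
      · exact h b hb'
      · rw [bowenDist_comm]; exact h a ha'
      · exact hE.2 a ha' b hb' hab
  have hmem : E.card + 1 ∈ S := ⟨insert x E, hsep', by rw [Finset.card_insert_of_notMem hxE]⟩
  have : E.card + 1 ≤ sSup S := le_csSup hbdd hmem
  omega

lemma Qn_le_Pn [∀ k, CompactSpace (X k)] (T : ∀ k, X k → X (k + 1))
    (hT : ∀ k, Continuous (T k)) (f : ∀ k, X k → ℝ) (Z : Set (X 0)) (n : ℕ)
    {ε : ℝ} (hε : 0 < ε) : NDS.Qn T f Z n ε ≤ NDS.Pn T f Z n ε := by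
  obtain ⟨E, hsep, hspan⟩ := exists_max_sep T hT n hε Z
  exact le_trans (iInf₂_le E hspan) (le_iSup₂ (f := fun E _ => NDS.partSum T f n E) E hsep)

lemma partSum_sep_le_span (T : ∀ k, X k → X (k + 1)) (f : ∀ k, X k → ℝ)
    (Z : Set (X 0)) (n : ℕ) {ε ε' γ δ : ℝ}
    (hδ : ∀ k, ∀ x y : X k, dist x y < δ → |f k x - f k y| < γ)
    (h2 : 2 * ε' ≤ ε) (hlt : ε' < δ)
    {E F : Finset (X 0)} (hE : NDS.IsSeparated T n ε Z E) (hF : NDS.IsSpanning T n ε' Z F) :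
    NDS.partSum T f n E ≤ ENNReal.ofReal (Real.exp (n * γ)) * NDS.partSum T f n F := by
  classical
  have hch : ∀ x ∈ E, ∃ y ∈ F, NDS.bowenDist T n x y ≤ ε' := fun x hx => hF x (hE.1 hx)
  choose! g hgF hgd using hch
  have hinj : ∀ a ∈ E, ∀ b ∈ E, g a = g b → a = b := by
    intro a ha b hb hab
    by_contra hne
    have hsep := hE.2 a ha b hb hne
    have h1 : NDS.bowenDist T n a b ≤ NDS.bowenDist T n a (g a) + NDS.bowenDist T n (g a) b :=
      bowenDist_triangle T n a (g a) b
    have h2' : NDS.bowenDist T n (g a) b ≤ ε' := by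
      rw [bowenDist_comm, hab]; exact hgd b hb
    have h3 := hgd a ha
    linarith
  have hbirk : ∀ x ∈ E, NDS.birk T f n x ≤ n * γ + NDS.birk T f n (g x) := by
    intro x hx
    have hterm : ∀ j ∈ Finset.range n, f j (NDS.iter T j x) ≤ γ + f j (NDS.iter T j (g x)) := by
      intro j hj
      have hd : dist (NDS.iter T j x) (NDS.iter T j (g x)) < δ :=
        lt_of_le_of_lt (le_trans (dist_iter_le T (Finset.mem_range.1 hj) x (g x)) (hgd x hx)) hlt
      have := abs_lt.1 (hδ j _ _ hd)
      linarith [this.1]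
    calc NDS.birk T f n x ≤ ∑ j ∈ Finset.range n, (γ + f j (NDS.iter T j (g x))) :=
          Finset.sum_le_sum hterm
      _ = n * γ + NDS.birk T f n (g x) := by
          rw [Finset.sum_add_distrib, Finset.sum_const, Finset.card_range, NDS.birk,
            nsmul_eq_mul]
  have hstep : NDS.partSum T f n E
      ≤ ∑ x ∈ E, ENNReal.ofReal (Real.exp (n * γ)) *
          ENNReal.ofReal (Real.exp (NDS.birk T f n (g x))) := by
    apply Finset.sum_le_sum
    intro x hx
    rw [← ENNReal.ofReal_mul (Real.exp_nonneg _), ← Real.exp_add]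
    exact ENNReal.ofReal_le_ofReal (Real.exp_le_exp.2 (hbirk x hx))
  refine hstep.trans ?_
  rw [← Finset.mul_sum]
  apply mul_le_mul_right
  calc (∑ x ∈ E, ENNReal.ofReal (Real.exp (NDS.birk T f n (g x))))
      = ∑ y ∈ E.image g, ENNReal.ofReal (Real.exp (NDS.birk T f n y)) :=
        (Finset.sum_image (f := fun y => ENNReal.ofReal (Real.exp (NDS.birk T f n y))) hinj).symm
    _ ≤ NDS.partSum T f n F := by
        apply Finset.sum_le_sum_of_subset
        intro y hy
        obtain ⟨x, hx, rfl⟩ := Finset.mem_image.1 hy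
        exact hgF x hx

lemma Pn_le_mul_Qn (T : ∀ k, X k → X (k + 1)) (f : ∀ k, X k → ℝ)
    (Z : Set (X 0)) (n : ℕ) {ε ε' γ δ : ℝ}
    (hδ : ∀ k, ∀ x y : X k, dist x y < δ → |f k x - f k y| < γ)
    (h2 : 2 * ε' ≤ ε) (hlt : ε' < δ) :
    NDS.Pn T f Z n ε ≤ ENNReal.ofReal (Real.exp (n * γ)) * NDS.Qn T f Z n ε' := by
  set c : ℝ≥0∞ := ENNReal.ofReal (Real.exp (n * γ)) with hc
  have hc0 : c ≠ 0 := by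
    simp [hc, ENNReal.ofReal_eq_zero, not_le, Real.exp_pos]
  have hct : c ≠ ⊤ := ENNReal.ofReal_ne_top
  apply iSup₂_le
  intro E hE
  rw [mul_comm, ← ENNReal.div_le_iff hc0 hct]
  apply le_iInf₂
  intro F hF
  rw [ENNReal.div_le_iff hc0 hct, mul_comm]
  exact partSum_sep_le_span T f Z n hδ h2 hlt hE hF

lemma ereal_mul_mono (a : EReal) (ha : 0 ≤ a) {x y : EReal} (h : x ≤ y) :
    a * x ≤ a * y := by
  rw [EReal.mul_comm a x, EReal.mul_comm a y]
  exact mul_le_mul_of_nonneg_right h ha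

lemma inv_nat_nonneg (n : ℕ) : (0 : EReal) ≤ (((n : ℝ)⁻¹ : ℝ) : EReal) := by
  exact_mod_cast inv_nonneg.2 (Nat.cast_nonneg n)

lemma lowRate_mono {u v : ℕ → ℝ≥0∞} (h : ∀ n, u n ≤ v n) :
    NDS.lowRate u ≤ NDS.lowRate v :=
  Filter.liminf_le_liminf (Filter.Eventually.of_forall fun n =>
    ereal_mul_mono _ (inv_nat_nonneg n) (ENNReal.log_monotone (h n)))

lemma upRate_mono {u v : ℕ → ℝ≥0∞} (h : ∀ n, u n ≤ v n) :
    NDS.upRate u ≤ NDS.upRate v :=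
  Filter.limsup_le_limsup (Filter.Eventually.of_forall fun n =>
    ereal_mul_mono _ (inv_nat_nonneg n) (ENNReal.log_monotone (h n)))

lemma key_rate_ineq {γ : ℝ} (hγ : 0 < γ) {u v : ℕ → ℝ≥0∞}
    (h : ∀ n : ℕ, u n ≤ ENNReal.ofReal (Real.exp (n * γ)) * v n) (n : ℕ) :
    (((n : ℝ)⁻¹ : ℝ) : EReal) * ENNReal.log (u n)
      ≤ (γ : EReal) + (((n : ℝ)⁻¹ : ℝ) : EReal) * ENNReal.log (v n) := by
  have hlog : ENNReal.log (u n) ≤ ((n * γ : ℝ) : EReal) + ENNReal.log (v n) := by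
    refine le_trans (ENNReal.log_monotone (h n)) ?_
    rw [ENNReal.log_mul_add, ENNReal.log_ofReal_of_pos (Real.exp_pos _), Real.log_exp]
  have hmul : (((n : ℝ)⁻¹ : ℝ) : EReal) * ENNReal.log (u n)
      ≤ (((n : ℝ)⁻¹ : ℝ) : EReal) * (((n * γ : ℝ) : EReal) + ENNReal.log (v n)) :=
    ereal_mul_mono _ (inv_nat_nonneg n) hlog
  refine hmul.trans ?_
  rcases Nat.eq_zero_or_pos n with rfl | hn
  · simp only [Nat.cast_zero, inv_zero, EReal.coe_zero, zero_mul, add_zero]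
    exact_mod_cast hγ.le
  · have hn0 : (n : ℝ) ≠ 0 := Nat.cast_ne_zero.2 hn.ne'
    have hpos : (0 : EReal) < (((n : ℝ)⁻¹ : ℝ) : EReal) := by
      exact_mod_cast inv_pos.2 (by positivity : (0:ℝ) < (n:ℝ))
    induction ENNReal.log (v n) using EReal.rec with
    | bot =>
      simp only [EReal.add_bot, EReal.mul_bot_of_pos hpos, le_refl]
    | coe r =>
      have heq : (n : ℝ)⁻¹ * ((n : ℝ) * γ + r) = γ + (n : ℝ)⁻¹ * r := by
        field_simp
      norm_cast
      exact le_of_eq heq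
    | top =>
      rw [EReal.add_top_of_ne_bot (EReal.coe_ne_bot _),
        EReal.mul_top_of_pos hpos,
        EReal.add_top_of_ne_bot (EReal.coe_ne_bot _)]

lemma lowRate_le_add {γ : ℝ} (hγ : 0 < γ) {u v : ℕ → ℝ≥0∞}
    (h : ∀ n : ℕ, u n ≤ ENNReal.ofReal (Real.exp (n * γ)) * v n) :
    NDS.lowRate u ≤ (γ : EReal) + NDS.lowRate v := by
  have h1 : NDS.lowRate u ≤ Filter.atTop.liminf
      ((fun _ : ℕ => (γ : EReal)) + fun n : ℕ => (((n : ℝ)⁻¹ : ℝ) : EReal) * ENNReal.log (v n)) := by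
    exact Filter.liminf_le_liminf (Filter.Eventually.of_forall (key_rate_ineq hγ h))
  refine h1.trans ?_
  have h2 := EReal.liminf_add_le
    (f := Filter.atTop) (u := fun _ : ℕ => (γ : EReal))
    (v := fun n : ℕ => (((n : ℝ)⁻¹ : ℝ) : EReal) * ENNReal.log (v n))
    (by rw [Filter.limsup_const]; exact Or.inl (EReal.coe_ne_bot _))
    (by rw [Filter.limsup_const]; exact Or.inl (EReal.coe_ne_top _))
  rwa [Filter.limsup_const] at h2

lemma upRate_le_add {γ : ℝ} (hγ : 0 < γ) {u v : ℕ → ℝ≥0∞}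
    (h : ∀ n : ℕ, u n ≤ ENNReal.ofReal (Real.exp (n * γ)) * v n) :
    NDS.upRate u ≤ (γ : EReal) + NDS.upRate v := by
  have h1 : NDS.upRate u ≤ Filter.atTop.limsup
      ((fun _ : ℕ => (γ : EReal)) + fun n : ℕ => (((n : ℝ)⁻¹ : ℝ) : EReal) * ENNReal.log (v n)) := by
    exact Filter.limsup_le_limsup (Filter.Eventually.of_forall (key_rate_ineq hγ h))
  refine h1.trans ?_
  have h2 := EReal.limsup_add_le
    (f := Filter.atTop) (u := fun _ : ℕ => (γ : EReal))
    (v := fun n : ℕ => (((n : ℝ)⁻¹ : ℝ) : EReal) * ENNReal.log (v n))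
    (by rw [Filter.limsup_const]; exact Or.inl (EReal.coe_ne_bot _))
    (by rw [Filter.limsup_const]; exact Or.inl (EReal.coe_ne_top _))
  rwa [Filter.limsup_const] at h2

lemma EReal.le_of_forall_add_le {x y : EReal} (h : ∀ γ : ℝ, 0 < γ → x ≤ (γ : EReal) + y) :
    x ≤ y := by
  induction y using EReal.rec with
  | bot =>
    have := h 1 one_pos
    rwa [EReal.add_bot] at this
  | coe r =>
    refine EReal.le_of_forall_lt_iff_le.1 fun z hz => ?_
    have hrz : r < z := by exact_mod_cast hz
    have := h (z - r) (by linarith)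
    calc x ≤ ((z - r : ℝ) : EReal) + (r : EReal) := this
      _ = ((z : ℝ) : EReal) := by norm_cast; ring_nf
  | top => exact le_top

end Aux

/-- For any NDS `(X,T)`, subset `Z ⊆ X 0` and potential `f`, one has
`Q_low ≤ P_low` and `Q_up ≤ P_up`; if moreover `f` is equicontinuous then
`Q_low = P_low` and `Q_up = P_up`, i.e. the lower and upper topological pressures exist. -/
theorem spanning_vs_separated_pressures {X : ℕ → Type*} [∀ k, MetricSpace (X k)]
    [∀ k, CompactSpace (X k)] (T : ∀ k, X k → X (k + 1)) (hT : ∀ k, Continuous (T k))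
    (f : ∀ k, X k → ℝ) (hf : ∀ k, Continuous (f k)) (Z : Set (X 0)) :
    (NDS.Qlow T f Z ≤ NDS.Plow T f Z ∧ NDS.Qup T f Z ≤ NDS.Pup T f Z) ∧
      (NDS.EquicontPotential f →
        NDS.Qlow T f Z = NDS.Plow T f Z ∧ NDS.Qup T f Z = NDS.Pup T f Z) := by
  have hQP_low : NDS.Qlow T f Z ≤ NDS.Plow T f Z := by
    apply iSup₂_le
    intro ε hε
    exact le_trans (lowRate_mono fun n => Qn_le_Pn T hT f Z n hε)
      (le_iSup₂ (f := fun ε _ => NDS.lowRate fun n => NDS.Pn T f Z n ε) ε hε)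
  have hQP_up : NDS.Qup T f Z ≤ NDS.Pup T f Z := by
    apply iSup₂_le
    intro ε hε
    exact le_trans (upRate_mono fun n => Qn_le_Pn T hT f Z n hε)
      (le_iSup₂ (f := fun ε _ => NDS.upRate fun n => NDS.Pn T f Z n ε) ε hε)
  refine ⟨⟨hQP_low, hQP_up⟩, fun hfe => ?_⟩
  have hkey : ∀ γ : ℝ, 0 < γ →
      NDS.Plow T f Z ≤ (γ : EReal) + NDS.Qlow T f Z ∧
      NDS.Pup T f Z ≤ (γ : EReal) + NDS.Qup T f Z := by
    intro γ hγ
    obtain ⟨δ, hδ0, hδ⟩ := hfe γ hγ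
    have main : ∀ ε : ℝ, 0 < ε → ∃ ε' : ℝ, 0 < ε' ∧
        ∀ n : ℕ, NDS.Pn T f Z n ε ≤ ENNReal.ofReal (Real.exp (n * γ)) * NDS.Qn T f Z n ε' := by
      intro ε hε
      refine ⟨min (δ / 2) (ε / 2), lt_min (half_pos hδ0) (half_pos hε), fun n => ?_⟩
      apply Pn_le_mul_Qn T f Z n hδ
      · have : min (δ / 2) (ε / 2) ≤ ε / 2 := min_le_right _ _
        linarith
      · have : min (δ / 2) (ε / 2) ≤ δ / 2 := min_le_left _ _
        linarith
    constructor
    · apply iSup₂_le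
      intro ε hε
      obtain ⟨ε', hε', hn⟩ := main ε hε
      refine (lowRate_le_add hγ hn).trans ?_
      exact add_le_add_right
        (le_iSup₂ (f := fun ε _ => NDS.lowRate fun n => NDS.Qn T f Z n ε) ε' hε') _
    · apply iSup₂_le
      intro ε hε
      obtain ⟨ε', hε', hn⟩ := main ε hε
      refine (upRate_le_add hγ hn).trans ?_
      exact add_le_add_right
        (le_iSup₂ (f := fun ε _ => NDS.upRate fun n => NDS.Qn T f Z n ε) ε' hε') _
  constructor
  · exact le_antisymm hQP_low (EReal.le_of_forall_add_le fun γ hγ => (hkey γ hγ).1)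
  · exact le_antisymm hQP_up (EReal.le_of_forall_add_le fun γ hγ => (hkey γ hγ).2)
end
end

section
/- Let (X,T) be an NDS, Z ⊂ X_0, and let f be an equicontinuous potential. Then P_L(T,f,Z) = sup_𝒰 liminf_{n→∞} (1/n)·log Q_n(T,f,Z,𝒰) = lim_{diam(𝒰)→0} liminf_{n→∞} (1/n)·log Q_n(T,f,Z,𝒰) and P_U(T,f,Z) = sup_𝒰 limsup_{n→∞} (1/n)·log Q_n(T,f,Z,𝒰) = lim_{diam(𝒰)→0} limsup_{n→∞} (1/n)·log Q_n(T,f,Z,𝒰), where 𝒰 ranges over all sequences of open covers of the X_k possessing a Lebesgue number. -/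
open Filter Set
open scoped ENNReal NNReal

noncomputable section

namespace NDS

open scoped Classical

variable {X : ℕ → Type*} [∀ k, MetricSpace (X k)]

/-- A sequence `𝒰 = {𝒰_k}` of open covers of the spaces `X k`. -/
structure CoverSeq (X : ℕ → Type*) [∀ k, MetricSpace (X k)] where
  mem : ∀ k, Set (Set (X k))
  isOpen' : ∀ k, ∀ u ∈ mem k, IsOpen u
  covers' : ∀ k, ∀ x : X k, ∃ u ∈ mem k, x ∈ u

/-- `𝒰` has a (uniform) Lebesgue number. -/
def HasLebesgueNumber (𝒰 : CoverSeq X) : Prop :=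
  ∃ δ : ℝ, 0 < δ ∧ ∀ k, ∀ x : X k, ∃ u ∈ 𝒰.mem k, Metric.ball x δ ⊆ u

/-- `diam 𝒰 = sup_k sup_{u ∈ 𝒰_k} diam u` (in `ℝ≥0∞`). -/
def coverDiam (𝒰 : CoverSeq X) : ℝ≥0∞ :=
  ⨆ (k : ℕ), ⨆ u ∈ 𝒰.mem k, EMetric.diam u

/-- The cylinder `X_0[U] = ⋂_{j<n} (T^j)⁻¹ (U_j)` associated with a string `v` of length `n`. -/
def cylinder (T : ∀ k, X k → X (k + 1)) (n : ℕ) (v : ∀ j, Set (X j)) : Set (X 0) :=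
  ⋂ (j : ℕ) (_ : j < n), iter T j ⁻¹' v j

/-- `exp(S̲_n^T f (U))`, where `S̲_n^T f (U) = inf_{x ∈ X_0[U]} S_n^T f x` (`= -∞`, i.e. the
weight is `0`, when the cylinder is empty). -/
def cylWeightInf (T : ∀ k, X k → X (k + 1)) (f : ∀ k, X k → ℝ) (n : ℕ)
    (v : ∀ j, Set (X j)) : ℝ≥0∞ :=
  if (cylinder T n v).Nonempty then
    ⨅ x ∈ cylinder T n v, ENNReal.ofReal (Real.exp (birk T f n x))
  else 0

/-- `Q_n(T,f,Z,𝒰)`: infimum over families `Γ ⊆ 𝒰_0^n` of strings of length `n` covering `Z`. -/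
def QnCov (T : ∀ k, X k → X (k + 1)) (f : ∀ k, X k → ℝ) (Z : Set (X 0)) (n : ℕ)
    (𝒰 : CoverSeq X) : ℝ≥0∞ :=
  ⨅ (Γ : Set (∀ j, Set (X j)))
    (_ : (∀ v ∈ Γ, ∀ j < n, v j ∈ 𝒰.mem j) ∧ Z ⊆ ⋃ v ∈ Γ, cylinder T n v),
    ∑' v : Γ, cylWeightInf T f n v.1

end NDS



open Filter Set
open scoped ENNReal NNReal

noncomputable section
namespace NDS

variable {X : ℕ → Type*} [∀ k, MetricSpace (X k)]

theorem iter_continuous (T : ∀ k, X k → X (k + 1)) (hT : ∀ k, Continuous (T k)) (j : ℕ) :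
    Continuous (iter T j) := by
  induction j with
  | zero => exact continuous_id
  | succ j ih => exact (hT j).comp ih

theorem dist_le_bowenDist (T : ∀ k, X k → X (k + 1)) {n j : ℕ} (hj : j < n) (x y : X 0) :
    dist (iter T j x) (iter T j y) ≤ bowenDist T n x y := by
  rw [bowenDist, dist_nndist]
  exact_mod_cast Finset.le_sup (f := fun j => nndist (iter T j x) (iter T j y))
    (Finset.mem_range.2 hj)

theorem bowenDist_le (T : ∀ k, X k → X (k + 1)) {n : ℕ} {x y : X 0} {c : ℝ} (hc : 0 ≤ c)
    (h : ∀ j < n, dist (iter T j x) (iter T j y) ≤ c) : bowenDist T n x y ≤ c := by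
  rw [bowenDist, ← Real.coe_toNNReal c hc]
  norm_cast
  refine Finset.sup_le fun j hj => ?_
  have := h j (Finset.mem_range.1 hj)
  rw [dist_nndist, ← Real.coe_toNNReal c hc] at this
  exact_mod_cast this

theorem bowenDist_nonneg (T : ∀ k, X k → X (k + 1)) (n : ℕ) (x y : X 0) :
    0 ≤ bowenDist T n x y := by
  rw [bowenDist]; positivity

theorem bowenDist_self (T : ∀ k, X k → X (k + 1)) (n : ℕ) (x : X 0) :
    bowenDist T n x x = 0 := by
  rw [bowenDist]
  norm_cast
  simp

theorem bowenDist_comm (T : ∀ k, X k → X (k + 1)) (n : ℕ) (x y : X 0) :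
    bowenDist T n x y = bowenDist T n y x := by
  rw [bowenDist, bowenDist]
  congr 1
  exact Finset.sup_congr rfl fun j _ => nndist_comm _ _

theorem bowenDist_triangle (T : ∀ k, X k → X (k + 1)) (n : ℕ) (x y z : X 0) :
    bowenDist T n x z ≤ bowenDist T n x y + bowenDist T n y z := by
  rw [bowenDist, bowenDist, bowenDist, ← NNReal.coe_add]
  norm_cast
  refine Finset.sup_le fun j hj => ?_
  exact le_trans (nndist_triangle _ (iter T j y) _)
    (add_le_add (Finset.le_sup (f := fun j => nndist (iter T j x) (iter T j y)) hj)
      (Finset.le_sup (f := fun j => nndist (iter T j y) (iter T j z)) hj))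

theorem bowenBall_eq (T : ∀ k, X k → X (k + 1)) (n : ℕ) (x : X 0) {ε : ℝ} (hε : 0 < ε) :
    bowenBall T n x ε = ⋂ (j : ℕ) (_ : j < n), iter T j ⁻¹' Metric.ball (iter T j x) ε := by
  ext y
  simp only [bowenBall, mem_setOf_eq, mem_iInter, mem_preimage, Metric.mem_ball]
  rw [bowenDist]
  have hε' : (0 : ℝ≥0) < ε.toNNReal := by simpa using hε
  constructor
  · intro h j hj
    calc dist (iter T j y) (iter T j x)
        = dist (iter T j x) (iter T j y) := dist_comm _ _
      _ ≤ bowenDist T n x y := dist_le_bowenDist T hj x y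
      _ < ε := h
  · intro h
    rw [← Real.coe_toNNReal ε hε.le]
    norm_cast
    rw [Finset.sup_lt_iff hε']
    intro j hj
    have := h j (Finset.mem_range.1 hj)
    rw [dist_comm, dist_nndist, ← Real.coe_toNNReal ε hε.le] at this
    exact_mod_cast this

theorem isOpen_bowenBall (T : ∀ k, X k → X (k + 1)) (hT : ∀ k, Continuous (T k)) (n : ℕ)
    (x : X 0) {ε : ℝ} (hε : 0 < ε) : IsOpen (bowenBall T n x ε) := by
  have : bowenBall T n x ε = ⋂ j ∈ Finset.range n, iter T j ⁻¹' Metric.ball (iter T j x) ε := by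
    rw [bowenBall_eq T n x hε]
    simp [Finset.mem_range]
  rw [this]
  exact isOpen_biInter_finset fun j _ =>
    (Metric.isOpen_ball).preimage (iter_continuous T hT j)

end NDS



open Filter Set
open scoped ENNReal NNReal

noncomputable section
namespace NDS

/-- Order isomorphism of `EReal` given by adding a real constant. -/
def erealAddIso (a : ℝ) : EReal ≃o EReal where
  toFun x := (a : EReal) + x
  invFun x := ((-a : ℝ) : EReal) + x
  left_inv x := by
    induction x using EReal.rec with
    | bot => simp
    | coe x =>
      show ((-a : ℝ) : EReal) + ((a : EReal) + (x : EReal)) = (x : EReal)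
      norm_cast; ring
    | top =>
      show ((-a : ℝ) : EReal) + ((a : EReal) + ⊤) = ⊤
      rw [EReal.coe_add_top, EReal.coe_add_top]
  right_inv x := by
    induction x using EReal.rec with
    | bot => simp
    | coe x =>
      show ((a : ℝ) : EReal) + (((-a : ℝ) : EReal) + (x : EReal)) = (x : EReal)
      norm_cast; ring
    | top =>
      show ((a : ℝ) : EReal) + (((-a : ℝ) : EReal) + ⊤) = ⊤
      rw [EReal.coe_add_top, EReal.coe_add_top]
  map_rel_iff' {x y} :=
    ⟨fun h => (EReal.addLECancellable_coe a) h, fun h => add_le_add_right h (a : EReal)⟩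

theorem liminf_const_add_ereal (a : ℝ) (g : ℕ → EReal) :
    Filter.atTop.liminf (fun n => (a : EReal) + g n) = (a : EReal) + Filter.atTop.liminf g :=
  by
  have h := (erealAddIso a).liminf_apply (u := g) (f := Filter.atTop)
  have e : ∀ x, erealAddIso a x = (a : EReal) + x := fun x => rfl
  simp only [e] at h
  exact h.symm

theorem limsup_const_add_ereal (a : ℝ) (g : ℕ → EReal) :
    Filter.atTop.limsup (fun n => (a : EReal) + g n) = (a : EReal) + Filter.atTop.limsup g :=
  by
  have h := (erealAddIso a).limsup_apply (u := g) (f := Filter.atTop)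
  have e : ∀ x, erealAddIso a x = (a : EReal) + x := fun x => rfl
  simp only [e] at h
  exact h.symm

theorem ereal_mul_coe_add {r : ℝ} (hr : 0 < r) (a : ℝ) (x : EReal) :
    (r : EReal) * ((a : EReal) + x) = ((r * a : ℝ) : EReal) + (r : EReal) * x := by
  have hrE : (0 : EReal) < (r : EReal) := EReal.coe_pos.2 hr
  induction x using EReal.rec with
  | bot =>
    rw [EReal.add_bot, EReal.mul_bot_of_pos hrE, EReal.add_bot]
  | coe x => rw [← EReal.coe_add, ← EReal.coe_mul, ← EReal.coe_mul, ← EReal.coe_add]; ring_nf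
  | top =>
    rw [EReal.coe_add_top, EReal.mul_top_of_pos hrE, EReal.coe_add_top]

theorem ereal_le_of_forall_pos {a b : EReal} (h : ∀ η : ℝ, 0 < η → a ≤ (η : EReal) + b) :
    a ≤ b := by
  induction b using EReal.rec with
  | bot => simpa using h 1 one_pos
  | coe b =>
    induction a using EReal.rec with
    | bot => exact bot_le
    | coe a =>
      norm_cast
      refine le_of_forall_pos_le_add fun ε hε => ?_
      have h2 := h ε hε
      rw [← EReal.coe_add] at h2
      have h3 := EReal.coe_le_coe_iff.1 h2
      linarith
    | top =>
      have h2 := h 1 one_pos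
      rw [show ((1:ℝ) : EReal) + (b : EReal) = (((1:ℝ) + b : ℝ) : EReal) by norm_cast,
        top_le_iff] at h2
      exact absurd h2 (EReal.coe_ne_top _)
  | top => exact le_top

theorem lowRate_mono {u v : ℕ → ℝ≥0∞} (h : ∀ n, 1 ≤ n → u n ≤ v n) :
    lowRate u ≤ lowRate v := by
  refine Filter.liminf_le_liminf ?_
  filter_upwards [Filter.eventually_ge_atTop 1] with n hn
  exact mul_le_mul_of_nonneg_left (ENNReal.log_le_log_iff.2 (h n hn))
    (by exact_mod_cast (by positivity : (0:ℝ) ≤ (n:ℝ)⁻¹))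

theorem upRate_mono {u v : ℕ → ℝ≥0∞} (h : ∀ n, 1 ≤ n → u n ≤ v n) :
    upRate u ≤ upRate v := by
  refine Filter.limsup_le_limsup ?_
  filter_upwards [Filter.eventually_ge_atTop 1] with n hn
  exact mul_le_mul_of_nonneg_left (ENNReal.log_le_log_iff.2 (h n hn))
    (by exact_mod_cast (by positivity : (0:ℝ) ≤ (n:ℝ)⁻¹))

theorem rate_term_le {u v : ℕ → ℝ≥0∞} (η : ℝ)
    (h : ∀ n, 1 ≤ n → u n ≤ ENNReal.ofReal (Real.exp (n * η)) * v n) :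
    ∀ n : ℕ, 1 ≤ n →
      (((n : ℝ)⁻¹ : ℝ) : EReal) * ENNReal.log (u n) ≤
        (η : EReal) + (((n : ℝ)⁻¹ : ℝ) : EReal) * ENNReal.log (v n) := by
  intro n hn
  have hnR : (0:ℝ) < (n:ℝ) := by exact_mod_cast hn
  have hr : (0:ℝ) < (n:ℝ)⁻¹ := by positivity
  calc (((n : ℝ)⁻¹ : ℝ) : EReal) * ENNReal.log (u n)
      ≤ (((n : ℝ)⁻¹ : ℝ) : EReal) * ENNReal.log (ENNReal.ofReal (Real.exp (n * η)) * v n) :=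
        mul_le_mul_of_nonneg_left (ENNReal.log_le_log_iff.2 (h n hn))
          (by exact_mod_cast hr.le)
    _ = (((n : ℝ)⁻¹ : ℝ) : EReal) * ((((n:ℝ) * η : ℝ) : EReal) + ENNReal.log (v n)) := by
        rw [ENNReal.log_mul_add, ENNReal.log_ofReal_of_pos (Real.exp_pos _),
          Real.log_exp]
    _ = (((n:ℝ)⁻¹ * ((n:ℝ) * η) : ℝ) : EReal) + (((n : ℝ)⁻¹ : ℝ) : EReal) * ENNReal.log (v n) :=
        ereal_mul_coe_add hr _ _
    _ = (η : EReal) + (((n : ℝ)⁻¹ : ℝ) : EReal) * ENNReal.log (v n) := by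
        rw [← mul_assoc, inv_mul_cancel₀ hnR.ne', one_mul]

theorem lowRate_le_add {u v : ℕ → ℝ≥0∞} (η : ℝ)
    (h : ∀ n, 1 ≤ n → u n ≤ ENNReal.ofReal (Real.exp (n * η)) * v n) :
    lowRate u ≤ (η : EReal) + lowRate v := by
  simp only [lowRate]
  rw [← liminf_const_add_ereal]
  refine Filter.liminf_le_liminf ?_
  filter_upwards [Filter.eventually_ge_atTop 1] with n hn
  exact rate_term_le η h n hn

theorem upRate_le_add {u v : ℕ → ℝ≥0∞} (η : ℝ)
    (h : ∀ n, 1 ≤ n → u n ≤ ENNReal.ofReal (Real.exp (n * η)) * v n) :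
    upRate u ≤ (η : EReal) + upRate v := by
  simp only [upRate]
  rw [← limsup_const_add_ereal]
  refine Filter.limsup_le_limsup ?_
  filter_upwards [Filter.eventually_ge_atTop 1] with n hn
  exact rate_term_le η h n hn

end NDS



open Filter Set
open scoped ENNReal NNReal

noncomputable section
namespace NDS

variable {X : ℕ → Type*} [∀ k, MetricSpace (X k)]

theorem birk_le_birk_add (T : ∀ k, X k → X (k + 1)) {f : ∀ k, X k → ℝ} {η δ : ℝ}
    (hδ : ∀ k, ∀ x y : X k, dist x y < δ → |f k x - f k y| < η)
    {n : ℕ} {x y : X 0} (h : ∀ j < n, dist (iter T j x) (iter T j y) < δ) :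
    birk T f n x ≤ birk T f n y + n * η := by
  have : birk T f n x - birk T f n y ≤ n * η := by
    rw [birk, birk, ← Finset.sum_sub_distrib]
    calc ∑ j ∈ Finset.range n, (f j (iter T j x) - f j (iter T j y))
        ≤ ∑ j ∈ Finset.range n, η := by
          refine Finset.sum_le_sum fun j hj => ?_
          have := hδ j _ _ (h j (Finset.mem_range.1 hj))
          exact le_of_lt (lt_of_le_of_lt (le_abs_self _) this)
      _ = n * η := by rw [Finset.sum_const, Finset.card_range, nsmul_eq_mul]
  linarith

theorem ofReal_exp_birk_le (T : ∀ k, X k → X (k + 1)) {f : ∀ k, X k → ℝ} {η δ : ℝ}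
    (hδ : ∀ k, ∀ x y : X k, dist x y < δ → |f k x - f k y| < η)
    {n : ℕ} {x y : X 0} (h : ∀ j < n, dist (iter T j x) (iter T j y) < δ) :
    ENNReal.ofReal (Real.exp (birk T f n x)) ≤
      ENNReal.ofReal (Real.exp (n * η)) * ENNReal.ofReal (Real.exp (birk T f n y)) := by
  rw [← ENNReal.ofReal_mul (Real.exp_pos _).le, ← Real.exp_add]
  exact ENNReal.ofReal_le_ofReal (Real.exp_le_exp.2
    (by linarith [birk_le_birk_add T hδ h]))

theorem Qn_anti (T : ∀ k, X k → X (k + 1)) (f : ∀ k, X k → ℝ) (Z : Set (X 0)) (n : ℕ)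
    {ε ε' : ℝ} (h : ε' ≤ ε) : Qn T f Z n ε ≤ Qn T f Z n ε' := by
  refine le_iInf₂ fun F hF => iInf₂_le F fun x hx => ?_
  obtain ⟨y, hy, hd⟩ := hF x hx
  exact ⟨y, hy, hd.trans h⟩

theorem Pn_anti (T : ∀ k, X k → X (k + 1)) (f : ∀ k, X k → ℝ) (Z : Set (X 0)) (n : ℕ)
    {ε ε' : ℝ} (h : ε' ≤ ε) : Pn T f Z n ε ≤ Pn T f Z n ε' := by
  refine iSup₂_le fun E hE => le_iSup₂ (f := fun E _ => partSum T f n E) E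
    ⟨hE.1, fun x hx y hy hxy => lt_of_le_of_lt h (hE.2 x hx y hy hxy)⟩

theorem Qn_le_Pn [∀ k, CompactSpace (X k)] (T : ∀ k, X k → X (k + 1))
    (hT : ∀ k, Continuous (T k)) (f : ∀ k, X k → ℝ) (Z : Set (X 0)) (n : ℕ)
    {ε : ℝ} (hε : 0 < ε) : Qn T f Z n ε ≤ Pn T f Z n ε := by
  classical
  have hε2 : 0 < ε / 2 := half_pos hε
  -- finite subcover by Bowen balls of radius ε/2
  obtain ⟨t, ht⟩ := isCompact_univ.elim_finite_subcover
    (fun x : X 0 => bowenBall T n x (ε / 2))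
    (fun x => isOpen_bowenBall T hT n x hε2)
    (fun x _ => mem_iUnion.2 ⟨x, by simp [bowenBall, bowenDist_self, hε2]⟩)
  -- every (n,ε)-separated set has cardinality at most t.card
  have hcard : ∀ E : Finset (X 0), IsSeparated T n ε Z E → E.card ≤ t.card := by
    intro E hE
    have hg : ∀ e : X 0, ∃ c ∈ t, e ∈ bowenBall T n c (ε / 2) := by
      intro e
      have := ht (mem_univ e)
      simpa using this
    choose g hg1 hg2 using hg
    refine Finset.card_le_card_of_injOn g (fun e _ => hg1 e) ?_
    intro e he e' he' hgee
    by_contra hne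
    have h1 : bowenDist T n (g e) e < ε / 2 := hg2 e
    have h2 : bowenDist T n (g e) e' < ε / 2 := by
      have := hg2 e'
      rwa [← hgee] at this
    have h3 : ε < bowenDist T n e e' := hE.2 e he e' he' hne
    have h4 : bowenDist T n e e' ≤ bowenDist T n e (g e) + bowenDist T n (g e) e' :=
      bowenDist_triangle T n _ _ _
    rw [bowenDist_comm T n e (g e)] at h4
    linarith
  -- a separated set of maximal cardinality
  set S : Set ℕ := {c | ∃ E : Finset (X 0), IsSeparated T n ε Z E ∧ E.card = c} with hS
  have hS0 : (0 : ℕ) ∈ S := ⟨∅, ⟨by simp, by simp⟩, by simp⟩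
  have hSbdd : BddAbove S := ⟨t.card, fun c ⟨E, hE, hEc⟩ => hEc ▸ hcard E hE⟩
  obtain ⟨E0, hE0, hE0card⟩ := Nat.sSup_mem ⟨0, hS0⟩ hSbdd
  -- E0 is spanning
  have hspan : IsSpanning T n ε Z E0 := by
    intro x hx
    by_contra hno
    push_neg at hno
    have hxE0 : x ∉ E0 := fun hmem => absurd (le_of_eq (bowenDist_self T n x)) 
      (not_le.2 (lt_of_lt_of_le hε (le_of_lt (hno x hmem))))
    have hsep : IsSeparated T n ε Z (insert x E0) := by
      constructor
      · intro y hy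
        rcases Finset.mem_insert.1 (by exact_mod_cast hy) with h | h
        · rw [h]; exact hx
        · exact hE0.1 h
      · intro a ha b hb hab
        rcases Finset.mem_insert.1 ha with ha' | ha' <;>
          rcases Finset.mem_insert.1 hb with hb' | hb'
        · exact absurd (ha'.trans hb'.symm) hab
        · exact ha' ▸ hno b hb'
        · rw [bowenDist_comm]; exact hb' ▸ hno a ha'
        · exact hE0.2 a ha' b hb' hab
    have : (insert x E0).card ≤ sSup S := le_csSup hSbdd ⟨_, hsep, rfl⟩
    rw [Finset.card_insert_of_notMem hxE0, hE0card] at this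
    omega
  exact le_trans (iInf₂_le E0 hspan) (le_iSup₂ (f := fun E _ => partSum T f n E) E0 hE0)

theorem Pn_le_mul_Qn (T : ∀ k, X k → X (k + 1)) (f : ∀ k, X k → ℝ) (Z : Set (X 0))
    {η δ : ℝ} (hδ : ∀ k, ∀ x y : X k, dist x y < δ → |f k x - f k y| < η)
    {ε : ℝ} (hε : 0 < ε) (hεδ : ε < δ) (n : ℕ) :
    Pn T f Z n ε ≤ ENNReal.ofReal (Real.exp (n * η)) * Qn T f Z n (ε / 2) := by
  set c : ℝ≥0∞ := ENNReal.ofReal (Real.exp (n * η)) with hc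
  have hc0 : c ≠ 0 := by simp [hc, Real.exp_pos]
  have hctop : c ≠ ⊤ := ENNReal.ofReal_ne_top
  rw [Qn, ENNReal.mul_iInf_of_ne hc0 hctop]
  refine le_iInf fun F => ?_
  rw [ENNReal.mul_iInf_of_ne hc0 hctop]
  refine le_iInf fun hF => ?_
  refine iSup₂_le fun E hE => ?_
  -- choose a spanning point for each x
  have hφ : ∀ x ∈ E, ∃ y ∈ F, bowenDist T n x y ≤ ε / 2 := fun x hx => hF x (hE.1 hx)
  classical
  set φ : X 0 → X 0 := fun x =>
    if h : ∃ y ∈ F, bowenDist T n x y ≤ ε / 2 then h.choose else x with hφdef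
  have hφF : ∀ x ∈ E, φ x ∈ F ∧ bowenDist T n x (φ x) ≤ ε / 2 := by
    intro x hx
    have h := hφ x hx
    simp only [hφdef, dif_pos h]
    exact ⟨h.choose_spec.1, h.choose_spec.2⟩
  have hinj : Set.InjOn φ ↑E := by
    intro x hx x' hx' hxx'
    by_contra hne
    have h1 := (hφF x hx).2
    have h2 := (hφF x' hx').2
    have h3 : ε < bowenDist T n x x' := hE.2 x hx x' hx' hne
    have h4 : bowenDist T n x x' ≤ bowenDist T n x (φ x) + bowenDist T n (φ x) x' :=
      bowenDist_triangle T n _ _ _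
    rw [bowenDist_comm T n (φ x) x'] at h4
    rw [← hxx'] at h2
    linarith
  calc partSum T f n E
      ≤ ∑ x ∈ E, c * ENNReal.ofReal (Real.exp (birk T f n (φ x))) := by
        refine Finset.sum_le_sum fun x hx => ?_
        refine ofReal_exp_birk_le T hδ fun j hj => ?_
        calc dist (iter T j x) (iter T j (φ x)) ≤ bowenDist T n x (φ x) :=
              dist_le_bowenDist T hj _ _
          _ ≤ ε / 2 := (hφF x hx).2
          _ < δ := by linarith
    _ = c * ∑ x ∈ E, ENNReal.ofReal (Real.exp (birk T f n (φ x))) := by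
        rw [Finset.mul_sum]
    _ = c * ∑ y ∈ E.image φ, ENNReal.ofReal (Real.exp (birk T f n y)) := by
        rw [Finset.sum_image (fun x hx y hy h => hinj hx hy h)]
    _ ≤ c * partSum T f n F := by
        refine mul_le_mul_right ?_ c
        refine Finset.sum_le_sum_of_subset fun y hy => ?_
        obtain ⟨x, hx, rfl⟩ := Finset.mem_image.1 hy
        exact (hφF x hx).1

end NDS



open Filter Set
open scoped ENNReal NNReal

noncomputable section
namespace NDS

variable {X : ℕ → Type*} [∀ k, MetricSpace (X k)]

theorem finsetSum_le_tsum_set {α : Type*} {s : Finset α} {A : Set α} (hsA : ↑s ⊆ A)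
    (g : α → ℝ≥0∞) : ∑ x ∈ s, g x ≤ ∑' x : A, g x := by
  rw [tsum_subtype]
  calc ∑ x ∈ s, g x = ∑ x ∈ s, A.indicator g x :=
        Finset.sum_congr rfl fun x hx => (Set.indicator_of_mem (hsA hx) g).symm
    _ ≤ ∑' x, A.indicator g x := ENNReal.sum_le_tsum s

theorem finset_sum_image_le {α β : Type*} [DecidableEq β] (s : Finset α) (v : α → β)
    (g : β → ℝ≥0∞) : ∑ w ∈ s.image v, g w ≤ ∑ y ∈ s, g (v y) := by
  classical
  induction s using Finset.induction with
  | empty => simp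
  | @insert a s h ih =>
    rw [Finset.image_insert, Finset.sum_insert h]
    by_cases hmem : v a ∈ Finset.image v s
    · rw [Finset.insert_eq_self.2 hmem]
      exact le_trans ih le_add_self
    · rw [Finset.sum_insert hmem]
      exact add_le_add_right ih _

/-- C3: existence of cover sequences with Lebesgue number and arbitrarily small diameter. -/
theorem exists_small_coverSeq [∀ k, CompactSpace (X k)] {r : ℝ} (hr : 0 < r) :
    ∃ 𝒰 : CoverSeq X, HasLebesgueNumber 𝒰 ∧ coverDiam 𝒰 ≤ ENNReal.ofReal r := by
  refine ⟨⟨fun k => {u | ∃ x : X k, u = Metric.ball x (r / 4)},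
    fun k u hu => by obtain ⟨x, rfl⟩ := hu; exact Metric.isOpen_ball,
    fun k x => ⟨Metric.ball x (r / 4), ⟨x, rfl⟩, Metric.mem_ball_self (by linarith)⟩⟩,
    ⟨r / 4, by linarith, fun k x => ⟨Metric.ball x (r / 4), ⟨x, rfl⟩, subset_rfl⟩⟩, ?_⟩
  refine iSup_le fun k => iSup₂_le fun u hu => ?_
  obtain ⟨x, rfl⟩ := hu
  rw [← Metric.emetric_ball]
  calc EMetric.diam (EMetric.ball x (ENNReal.ofReal (r / 4)))
      ≤ 2 * ENNReal.ofReal (r / 4) := EMetric.diam_ball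
    _ = ENNReal.ofReal (r / 4) + ENNReal.ofReal (r / 4) := two_mul _
    _ = ENNReal.ofReal (r / 4 + r / 4) := (ENNReal.ofReal_add (by linarith) (by linarith)).symm
    _ ≤ ENNReal.ofReal r := ENNReal.ofReal_le_ofReal (by linarith)

/-- C1: `QnCov` is bounded by `Qn` at scale below the Lebesgue number. -/
theorem QnCov_le_Qn (T : ∀ k, X k → X (k + 1)) (f : ∀ k, X k → ℝ) (Z : Set (X 0))
    {𝒰 : CoverSeq X} {δ : ℝ} (hδpos : 0 < δ)
    (hLeb : ∀ k, ∀ x : X k, ∃ u ∈ 𝒰.mem k, Metric.ball x δ ⊆ u)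
    {ε : ℝ} (hε : 0 < ε) (hεδ : ε < δ) (n : ℕ) :
    QnCov T f Z n 𝒰 ≤ Qn T f Z n ε := by
  classical
  refine le_iInf₂ fun F hF => ?_
  choose U hU1 hU2 using fun k (x : X k) => hLeb k x
  set v : X 0 → ∀ j, Set (X j) := fun y j => U j (iter T j y) with hv
  have hmem : ∀ y : X 0, ∀ j, v y j ∈ 𝒰.mem j := fun y j => hU1 j _
  have hself : ∀ y : X 0, y ∈ cylinder T n (v y) := by
    intro y
    refine mem_iInter.2 fun j => mem_iInter.2 fun hj => ?_
    exact hU2 j (iter T j y) (Metric.mem_ball_self hδpos)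
  have hcov : Z ⊆ ⋃ w ∈ (v '' ↑F), cylinder T n w := by
    intro z hz
    obtain ⟨y, hyF, hyd⟩ := hF z hz
    refine mem_biUnion (mem_image_of_mem v hyF) ?_
    refine mem_iInter.2 fun j => mem_iInter.2 fun hj => ?_
    refine hU2 j (iter T j y) (Metric.mem_ball.2 ?_)
    calc dist (iter T j z) (iter T j y) ≤ bowenDist T n z y := dist_le_bowenDist T hj _ _
      _ ≤ ε := hyd
      _ < δ := hεδ
  calc QnCov T f Z n 𝒰
      ≤ ∑' w : (v '' ↑F : Set (∀ j, Set (X j))), cylWeightInf T f n w.1 :=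
        iInf₂_le _ ⟨fun w hw j _ => by obtain ⟨y, _, rfl⟩ := hw; exact hmem y j, hcov⟩
    _ = ∑ w ∈ F.image v, cylWeightInf T f n w := by
        rw [← Finset.coe_image]
        exact Finset.tsum_subtype _ _
    _ ≤ ∑ y ∈ F, cylWeightInf T f n (v y) := finset_sum_image_le F v _
    _ ≤ partSum T f n F := by
        refine Finset.sum_le_sum fun y hy => ?_
        rw [cylWeightInf, if_pos ⟨y, hself y⟩]
        exact iInf₂_le y (hself y)

/-- C2: `Pn` is bounded by a multiple of `QnCov` for covers of small diameter. -/
theorem Pn_le_mul_QnCov (T : ∀ k, X k → X (k + 1)) (f : ∀ k, X k → ℝ) (Z : Set (X 0))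
    {η δ : ℝ} (hδ : ∀ k, ∀ x y : X k, dist x y < δ → |f k x - f k y| < η)
    {𝒰 : CoverSeq X} {ε : ℝ} (hε : 0 < ε) (hεδ : ε < δ)
    (hdiam : coverDiam 𝒰 ≤ ENNReal.ofReal ε) (n : ℕ) :
    Pn T f Z n ε ≤ ENNReal.ofReal (Real.exp (n * η)) * QnCov T f Z n 𝒰 := by
  classical
  set c : ℝ≥0∞ := ENNReal.ofReal (Real.exp (n * η)) with hc
  have hc0 : c ≠ 0 := by simp [hc, Real.exp_pos]
  have hctop : c ≠ ⊤ := ENNReal.ofReal_ne_top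
  rw [QnCov, ENNReal.mul_iInf_of_ne hc0 hctop]
  refine le_iInf fun Γ => ?_
  rw [ENNReal.mul_iInf_of_ne hc0 hctop]
  refine le_iInf fun hΓ => ?_
  obtain ⟨hΓmem, hΓcov⟩ := hΓ
  refine iSup₂_le fun E hE => ?_
  -- key distance fact inside cylinders
  have hdist : ∀ w ∈ Γ, ∀ a b : X 0, a ∈ cylinder T n w → b ∈ cylinder T n w →
      ∀ j < n, dist (iter T j a) (iter T j b) ≤ ε := by
    intro w hw a b ha hb j hj
    have haj : iter T j a ∈ w j := mem_iInter.1 (mem_iInter.1 ha j) hj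
    have hbj : iter T j b ∈ w j := mem_iInter.1 (mem_iInter.1 hb j) hj
    have h1 : edist (iter T j a) (iter T j b) ≤ EMetric.diam (w j) :=
      EMetric.edist_le_diam_of_mem haj hbj
    have h2 : EMetric.diam (w j) ≤ coverDiam 𝒰 := by
      refine le_trans ?_ (le_iSup (fun k => ⨆ u ∈ 𝒰.mem k, EMetric.diam u) j)
      exact le_iSup₂ (f := fun u (_ : u ∈ 𝒰.mem j) => EMetric.diam u) (w j) (hΓmem w hw j hj)
    exact (edist_le_ofReal hε.le).1 (h1.trans (h2.trans hdiam))
  -- choice of a cylinder through each point of E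
  set φ : X 0 → ∀ j, Set (X j) := fun x =>
    if h : ∃ w ∈ Γ, x ∈ cylinder T n w then h.choose else fun _ => univ with hφdef
  have hφ : ∀ x ∈ E, φ x ∈ Γ ∧ x ∈ cylinder T n (φ x) := by
    intro x hx
    have h : ∃ w ∈ Γ, x ∈ cylinder T n w := by
      have := hΓcov (hE.1 hx)
      simpa using this
    simp only [hφdef, dif_pos h]
    exact ⟨h.choose_spec.1, h.choose_spec.2⟩
  have hinj : Set.InjOn φ ↑E := by
    intro x hx x' hx' hxx'
    by_contra hne
    have h3 : ε < bowenDist T n x x' := hE.2 x hx x' hx' hne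
    have h4 : bowenDist T n x x' ≤ ε := by
      refine bowenDist_le T hε.le fun j hj => ?_
      refine hdist (φ x) (hφ x hx).1 x x' (hφ x hx).2 ?_ j hj
      rw [hxx']; exact (hφ x' hx').2
    linarith
  have hweight : ∀ x ∈ E, ENNReal.ofReal (Real.exp (birk T f n x)) ≤ c * cylWeightInf T f n (φ x) := by
    intro x hx
    rw [cylWeightInf, if_pos ⟨x, (hφ x hx).2⟩, ENNReal.mul_iInf_of_ne hc0 hctop]
    refine le_iInf fun z => ?_
    rw [ENNReal.mul_iInf_of_ne hc0 hctop]
    refine le_iInf fun hz => ?_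
    refine ofReal_exp_birk_le T hδ fun j hj => ?_
    exact lt_of_le_of_lt (hdist (φ x) (hφ x hx).1 x z (hφ x hx).2 hz j hj) hεδ
  calc partSum T f n E
      ≤ ∑ x ∈ E, c * cylWeightInf T f n (φ x) := Finset.sum_le_sum hweight
    _ = c * ∑ x ∈ E, cylWeightInf T f n (φ x) := by rw [Finset.mul_sum]
    _ = c * ∑ w ∈ E.image φ, cylWeightInf T f n w := by
        rw [Finset.sum_image (fun x hx y hy h => hinj hx hy h)]
    _ ≤ c * ∑' w : Γ, cylWeightInf T f n w.1 := by
        refine mul_le_mul_right ?_ c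
        refine finsetSum_le_tsum_set ?_ _
        intro w hw
        obtain ⟨x, hx, rfl⟩ := Finset.mem_image.1 (by exact_mod_cast hw)
        exact (hφ x hx).1
end NDS



open Filter Set
open scoped ENNReal NNReal

noncomputable section
namespace NDS

variable {X : ℕ → Type*} [∀ k, MetricSpace (X k)] [∀ k, CompactSpace (X k)]
variable (T : ∀ k, X k → X (k + 1)) (f : ∀ k, X k → ℝ) (Z : Set (X 0))

theorem Qlow_le_Plow (hT : ∀ k, Continuous (T k)) : Qlow T f Z ≤ Plow T f Z := by
  refine iSup₂_le fun ε hε => ?_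
  exact le_trans (lowRate_mono fun n _ => Qn_le_Pn T hT f Z n hε)
    (le_iSup₂ (f := fun ε (_ : 0 < ε) => lowRate fun n => Pn T f Z n ε) ε hε)

theorem Qup_le_Pup (hT : ∀ k, Continuous (T k)) : Qup T f Z ≤ Pup T f Z := by
  refine iSup₂_le fun ε hε => ?_
  exact le_trans (upRate_mono fun n _ => Qn_le_Pn T hT f Z n hε)
    (le_iSup₂ (f := fun ε (_ : 0 < ε) => upRate fun n => Pn T f Z n ε) ε hε)

theorem Plow_le_Qlow (hfe : EquicontPotential f) : Plow T f Z ≤ Qlow T f Z := by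
  refine ereal_le_of_forall_pos fun η hη => ?_
  obtain ⟨δ, hδpos, hδ⟩ := hfe η hη
  refine iSup₂_le fun ε hε => ?_
  set ε' := min ε (δ / 2) with hε'def
  have hε' : 0 < ε' := lt_min hε (by linarith)
  have hε'δ : ε' < δ := lt_of_le_of_lt (min_le_right _ _) (by linarith)
  calc lowRate (fun n => Pn T f Z n ε)
      ≤ lowRate (fun n => Pn T f Z n ε') :=
        lowRate_mono fun n _ => Pn_anti T f Z n (min_le_left _ _)
    _ ≤ (η : EReal) + lowRate (fun n => Qn T f Z n (ε' / 2)) :=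
        lowRate_le_add η fun n _ => Pn_le_mul_Qn T f Z hδ hε' hε'δ n
    _ ≤ (η : EReal) + Qlow T f Z :=
        add_le_add_right (le_iSup₂ (f := fun ε (_ : 0 < ε) => lowRate fun n => Qn T f Z n ε)
          (ε' / 2) (half_pos hε')) _

theorem Pup_le_Qup (hfe : EquicontPotential f) : Pup T f Z ≤ Qup T f Z := by
  refine ereal_le_of_forall_pos fun η hη => ?_
  obtain ⟨δ, hδpos, hδ⟩ := hfe η hη
  refine iSup₂_le fun ε hε => ?_
  set ε' := min ε (δ / 2) with hε'def
  have hε' : 0 < ε' := lt_min hε (by linarith)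
  have hε'δ : ε' < δ := lt_of_le_of_lt (min_le_right _ _) (by linarith)
  calc upRate (fun n => Pn T f Z n ε)
      ≤ upRate (fun n => Pn T f Z n ε') :=
        upRate_mono fun n _ => Pn_anti T f Z n (min_le_left _ _)
    _ ≤ (η : EReal) + upRate (fun n => Qn T f Z n (ε' / 2)) :=
        upRate_le_add η fun n _ => Pn_le_mul_Qn T f Z hδ hε' hε'δ n
    _ ≤ (η : EReal) + Qup T f Z :=
        add_le_add_right (le_iSup₂ (f := fun ε (_ : 0 < ε) => upRate fun n => Qn T f Z n ε)
          (ε' / 2) (half_pos hε')) _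

set_option linter.unusedSectionVars false in
theorem supCov_low_le : (⨆ (𝒰 : CoverSeq X) (_ : HasLebesgueNumber 𝒰),
    lowRate fun n => QnCov T f Z n 𝒰) ≤ Qlow T f Z := by
  refine iSup₂_le fun 𝒰 h𝒰 => ?_
  obtain ⟨δ, hδpos, hLeb⟩ := h𝒰
  refine le_trans (lowRate_mono fun n _ =>
    QnCov_le_Qn T f Z hδpos hLeb (half_pos hδpos) (half_lt_self hδpos) n) ?_
  exact le_iSup₂ (f := fun ε (_ : 0 < ε) => lowRate fun n => Qn T f Z n ε) (δ / 2)
    (half_pos hδpos)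

set_option linter.unusedSectionVars false in
theorem supCov_up_le : (⨆ (𝒰 : CoverSeq X) (_ : HasLebesgueNumber 𝒰),
    upRate fun n => QnCov T f Z n 𝒰) ≤ Qup T f Z := by
  refine iSup₂_le fun 𝒰 h𝒰 => ?_
  obtain ⟨δ, hδpos, hLeb⟩ := h𝒰
  refine le_trans (upRate_mono fun n _ =>
    QnCov_le_Qn T f Z hδpos hLeb (half_pos hδpos) (half_lt_self hδpos) n) ?_
  exact le_iSup₂ (f := fun ε (_ : 0 < ε) => upRate fun n => Qn T f Z n ε) (δ / 2)
    (half_pos hδpos)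

theorem Plow_le_supCov (hfe : EquicontPotential f) : Plow T f Z ≤ (⨆ (𝒰 : CoverSeq X) (_ : HasLebesgueNumber 𝒰),
    lowRate fun n => QnCov T f Z n 𝒰) := by
  refine ereal_le_of_forall_pos fun η hη => ?_
  obtain ⟨δ, hδpos, hδ⟩ := hfe η hη
  refine iSup₂_le fun ε0 hε0 => ?_
  set ε := min ε0 (δ / 2) with hεdef
  have hε : 0 < ε := lt_min hε0 (by linarith)
  have hεδ : ε < δ := lt_of_le_of_lt (min_le_right _ _) (by linarith)
  obtain ⟨𝒰, hLeb, hdiam⟩ := exists_small_coverSeq (X := X) hε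
  calc lowRate (fun n => Pn T f Z n ε0)
      ≤ lowRate (fun n => Pn T f Z n ε) :=
        lowRate_mono fun n _ => Pn_anti T f Z n (min_le_left _ _)
    _ ≤ (η : EReal) + lowRate (fun n => QnCov T f Z n 𝒰) :=
        lowRate_le_add η fun n _ => Pn_le_mul_QnCov T f Z hδ hε hεδ hdiam n
    _ ≤ (η : EReal) + _ :=
        add_le_add_right (le_iSup₂ (f := fun 𝒰 (_ : HasLebesgueNumber 𝒰) =>
          lowRate fun n => QnCov T f Z n 𝒰) 𝒰 hLeb) _

theorem Pup_le_supCov (hfe : EquicontPotential f) : Pup T f Z ≤ (⨆ (𝒰 : CoverSeq X) (_ : HasLebesgueNumber 𝒰),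
    upRate fun n => QnCov T f Z n 𝒰) := by
  refine ereal_le_of_forall_pos fun η hη => ?_
  obtain ⟨δ, hδpos, hδ⟩ := hfe η hη
  refine iSup₂_le fun ε0 hε0 => ?_
  set ε := min ε0 (δ / 2) with hεdef
  have hε : 0 < ε := lt_min hε0 (by linarith)
  have hεδ : ε < δ := lt_of_le_of_lt (min_le_right _ _) (by linarith)
  obtain ⟨𝒰, hLeb, hdiam⟩ := exists_small_coverSeq (X := X) hε
  calc upRate (fun n => Pn T f Z n ε0)
      ≤ upRate (fun n => Pn T f Z n ε) :=
        upRate_mono fun n _ => Pn_anti T f Z n (min_le_left _ _)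
    _ ≤ (η : EReal) + upRate (fun n => QnCov T f Z n 𝒰) :=
        upRate_le_add η fun n _ => Pn_le_mul_QnCov T f Z hδ hε hεδ hdiam n
    _ ≤ (η : EReal) + _ :=
        add_le_add_right (le_iSup₂ (f := fun 𝒰 (_ : HasLebesgueNumber 𝒰) =>
          upRate fun n => QnCov T f Z n 𝒰) 𝒰 hLeb) _



theorem tendsto_low (hT : ∀ k, Continuous (T k)) (hfe : EquicontPotential f) :
    Filter.Tendsto (fun 𝒰 : {𝒰 : CoverSeq X // HasLebesgueNumber 𝒰} =>
        lowRate fun n => QnCov T f Z n 𝒰.1)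
      (Filter.comap (fun 𝒰 : {𝒰 : CoverSeq X // HasLebesgueNumber 𝒰} =>
        coverDiam 𝒰.1) (nhds 0)) (nhds (Qlow T f Z)) := by
  have hQP : Qlow T f Z = Plow T f Z :=
    le_antisymm (Qlow_le_Plow T f Z hT) (Plow_le_Qlow T f Z hfe)
  have hSL : (⨆ (𝒰 : CoverSeq X) (_ : HasLebesgueNumber 𝒰),
      lowRate fun n => QnCov T f Z n 𝒰) = Qlow T f Z :=
    le_antisymm (supCov_low_le T f Z) (hQP.trans_le (Plow_le_supCov T f Z hfe))
  refine tendsto_order.2 ⟨?_, ?_⟩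
  · intro b hb
    rw [hQP, Plow] at hb
    obtain ⟨ε0, hb2⟩ := lt_iSup_iff.1 hb
    obtain ⟨hε0, hb3⟩ := lt_iSup_iff.1 hb2
    obtain ⟨q, hbq, hqA⟩ := EReal.exists_between_coe_real hb3
    obtain ⟨q', hqq', hq'A⟩ := EReal.exists_between_coe_real hqA
    set η := q' - q with hηdef
    have hηpos : 0 < η := by
      have := EReal.coe_lt_coe_iff.1 hqq'
      simp only [hηdef]; linarith
    obtain ⟨δ, hδpos, hδ⟩ := hfe η hηpos
    set ε := min ε0 (δ / 2) with hεdef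
    have hε : 0 < ε := lt_min hε0 (by linarith)
    have hεδ : ε < δ := lt_of_le_of_lt (min_le_right _ _) (by linarith)
    have hkey : ∀ 𝒰 : {𝒰 : CoverSeq X // HasLebesgueNumber 𝒰},
        coverDiam 𝒰.1 < ENNReal.ofReal ε →
        b < lowRate fun n => QnCov T f Z n 𝒰.1 := by
      intro 𝒰 hdiam
      have hA : lowRate (fun n => Pn T f Z n ε0) ≤
          (η : EReal) + lowRate (fun n => QnCov T f Z n 𝒰.1) := by
        calc lowRate (fun n => Pn T f Z n ε0)
            ≤ lowRate (fun n => Pn T f Z n ε) :=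
              lowRate_mono fun n _ => Pn_anti T f Z n (min_le_left _ _)
          _ ≤ _ := lowRate_le_add η fun n _ =>
              Pn_le_mul_QnCov T f Z hδ hε hεδ hdiam.le n
      by_contra hq
      push_neg at hq
      have h2 : lowRate (fun n => Pn T f Z n ε0) ≤ (η : EReal) + (q : EReal) :=
        le_trans hA (add_le_add_right (le_trans hq hbq.le) _)
      rw [← EReal.coe_add] at h2
      have h3 : (η + q : ℝ) = q' := by simp [hηdef]
      rw [h3] at h2
      exact absurd hq'A (not_lt.2 h2)
    have h0 : (0 : ℝ≥0∞) < ENNReal.ofReal ε := ENNReal.ofReal_pos.2 hε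
    have hmem := Filter.preimage_mem_comap (m := fun 𝒰 :
      {𝒰 : CoverSeq X // HasLebesgueNumber 𝒰} => coverDiam 𝒰.1) (Iio_mem_nhds h0)
    exact Filter.eventually_iff.2 (Filter.mem_of_superset hmem fun 𝒰 h => hkey 𝒰 h)
  · intro b hb
    refine Filter.Eventually.of_forall fun 𝒰 => lt_of_le_of_lt ?_ hb
    rw [← hSL]
    exact le_iSup₂ (f := fun 𝒰 (_ : HasLebesgueNumber 𝒰) =>
      lowRate fun n => QnCov T f Z n 𝒰) 𝒰.1 𝒰.2

theorem tendsto_up (hT : ∀ k, Continuous (T k)) (hfe : EquicontPotential f) :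
    Filter.Tendsto (fun 𝒰 : {𝒰 : CoverSeq X // HasLebesgueNumber 𝒰} =>
        upRate fun n => QnCov T f Z n 𝒰.1)
      (Filter.comap (fun 𝒰 : {𝒰 : CoverSeq X // HasLebesgueNumber 𝒰} =>
        coverDiam 𝒰.1) (nhds 0)) (nhds (Qup T f Z)) := by
  have hQP : Qup T f Z = Pup T f Z :=
    le_antisymm (Qup_le_Pup T f Z hT) (Pup_le_Qup T f Z hfe)
  have hSL : (⨆ (𝒰 : CoverSeq X) (_ : HasLebesgueNumber 𝒰),
      upRate fun n => QnCov T f Z n 𝒰) = Qup T f Z :=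
    le_antisymm (supCov_up_le T f Z) (hQP.trans_le (Pup_le_supCov T f Z hfe))
  refine tendsto_order.2 ⟨?_, ?_⟩
  · intro b hb
    rw [hQP, Pup] at hb
    obtain ⟨ε0, hb2⟩ := lt_iSup_iff.1 hb
    obtain ⟨hε0, hb3⟩ := lt_iSup_iff.1 hb2
    obtain ⟨q, hbq, hqA⟩ := EReal.exists_between_coe_real hb3
    obtain ⟨q', hqq', hq'A⟩ := EReal.exists_between_coe_real hqA
    set η := q' - q with hηdef
    have hηpos : 0 < η := by
      have := EReal.coe_lt_coe_iff.1 hqq'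
      simp only [hηdef]; linarith
    obtain ⟨δ, hδpos, hδ⟩ := hfe η hηpos
    set ε := min ε0 (δ / 2) with hεdef
    have hε : 0 < ε := lt_min hε0 (by linarith)
    have hεδ : ε < δ := lt_of_le_of_lt (min_le_right _ _) (by linarith)
    have hkey : ∀ 𝒰 : {𝒰 : CoverSeq X // HasLebesgueNumber 𝒰},
        coverDiam 𝒰.1 < ENNReal.ofReal ε →
        b < upRate fun n => QnCov T f Z n 𝒰.1 := by
      intro 𝒰 hdiam
      have hA : upRate (fun n => Pn T f Z n ε0) ≤
          (η : EReal) + upRate (fun n => QnCov T f Z n 𝒰.1) := by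
        calc upRate (fun n => Pn T f Z n ε0)
            ≤ upRate (fun n => Pn T f Z n ε) :=
              upRate_mono fun n _ => Pn_anti T f Z n (min_le_left _ _)
          _ ≤ _ := upRate_le_add η fun n _ =>
              Pn_le_mul_QnCov T f Z hδ hε hεδ hdiam.le n
      by_contra hq
      push_neg at hq
      have h2 : upRate (fun n => Pn T f Z n ε0) ≤ (η : EReal) + (q : EReal) :=
        le_trans hA (add_le_add_right (le_trans hq hbq.le) _)
      rw [← EReal.coe_add] at h2
      have h3 : (η + q : ℝ) = q' := by simp [hηdef]
      rw [h3] at h2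
      exact absurd hq'A (not_lt.2 h2)
    have h0 : (0 : ℝ≥0∞) < ENNReal.ofReal ε := ENNReal.ofReal_pos.2 hε
    have hmem := Filter.preimage_mem_comap (m := fun 𝒰 :
      {𝒰 : CoverSeq X // HasLebesgueNumber 𝒰} => coverDiam 𝒰.1) (Iio_mem_nhds h0)
    exact Filter.eventually_iff.2 (Filter.mem_of_superset hmem fun 𝒰 h => hkey 𝒰 h)
  · intro b hb
    refine Filter.Eventually.of_forall fun 𝒰 => lt_of_le_of_lt ?_ hb
    rw [← hSL]
    exact le_iSup₂ (f := fun 𝒰 (_ : HasLebesgueNumber 𝒰) =>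
      upRate fun n => QnCov T f Z n 𝒰) 𝒰.1 𝒰.2

end NDS

/-- For an equicontinuous potential `f`, the lower and upper topological
pressures exist and can be computed via open covers: they are the supremum over all cover
sequences `𝒰` with a Lebesgue number of the corresponding rates, and also the limits as
`diam 𝒰 → 0` of those rates. -/
theorem pressure_via_open_covers {X : ℕ → Type*} [∀ k, MetricSpace (X k)]
    [∀ k, CompactSpace (X k)] (T : ∀ k, X k → X (k + 1)) (hT : ∀ k, Continuous (T k))
    (f : ∀ k, X k → ℝ) (hf : ∀ k, Continuous (f k)) (hfe : NDS.EquicontPotential f)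
    (Z : Set (X 0)) :
    (NDS.Qlow T f Z = NDS.Plow T f Z ∧ NDS.Qup T f Z = NDS.Pup T f Z) ∧
    NDS.Qlow T f Z = (⨆ (𝒰 : NDS.CoverSeq X) (_ : NDS.HasLebesgueNumber 𝒰),
        NDS.lowRate fun n => NDS.QnCov T f Z n 𝒰) ∧
    NDS.Qup T f Z = (⨆ (𝒰 : NDS.CoverSeq X) (_ : NDS.HasLebesgueNumber 𝒰),
        NDS.upRate fun n => NDS.QnCov T f Z n 𝒰) ∧
    Filter.Tendsto (fun 𝒰 : {𝒰 : NDS.CoverSeq X // NDS.HasLebesgueNumber 𝒰} =>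
        NDS.lowRate fun n => NDS.QnCov T f Z n 𝒰.1)
      (Filter.comap (fun 𝒰 : {𝒰 : NDS.CoverSeq X // NDS.HasLebesgueNumber 𝒰} =>
        NDS.coverDiam 𝒰.1) (nhds 0)) (nhds (NDS.Qlow T f Z)) ∧
    Filter.Tendsto (fun 𝒰 : {𝒰 : NDS.CoverSeq X // NDS.HasLebesgueNumber 𝒰} =>
        NDS.upRate fun n => NDS.QnCov T f Z n 𝒰.1)
      (Filter.comap (fun 𝒰 : {𝒰 : NDS.CoverSeq X // NDS.HasLebesgueNumber 𝒰} =>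
        NDS.coverDiam 𝒰.1) (nhds 0)) (nhds (NDS.Qup T f Z)) := by
  have hQPl : NDS.Qlow T f Z = NDS.Plow T f Z :=
    le_antisymm (NDS.Qlow_le_Plow T f Z hT) (NDS.Plow_le_Qlow T f Z hfe)
  have hQPu : NDS.Qup T f Z = NDS.Pup T f Z :=
    le_antisymm (NDS.Qup_le_Pup T f Z hT) (NDS.Pup_le_Qup T f Z hfe)
  refine ⟨⟨hQPl, hQPu⟩, ?_, ?_, NDS.tendsto_low T f Z hT hfe, NDS.tendsto_up T f Z hT hfe⟩
  · exact le_antisymm (hQPl.trans_le (NDS.Plow_le_supCov T f Z hfe)) (NDS.supCov_low_le T f Z)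
  · exact le_antisymm (hQPu.trans_le (NDS.Pup_le_supCov T f Z hfe)) (NDS.supCov_up_le T f Z)
end
end
end
end
end
end
end

section
/- Let (X,T) be an NDS, Z ⊂ X_0, and let f be an equicontinuous potential. Then the Bowen pressure satisfies P^B(T,f,Z) = lim_{diam(𝒰)→0} P^{BPP}(T,f,Z,𝒰), where 𝒰 ranges over all sequences of open covers of the X_k possessing a Lebesgue number and P^{BPP}(T,f,Z,𝒰) is the open-cover Bowen pressure defined below. -/
open Filter Set
open scoped ENNReal NNReal

noncomputable section

namespace NDS

variable {X : ℕ → Type*} [∀ k, MetricSpace (X k)]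

/-- `exp(-n s + S̄_n^T f (U))`, where `S̄_n^T f (U) = sup_{x ∈ X_0[U]} S_n^T f x` (the weight is
`0` when the cylinder is empty, corresponding to `S̄ = -∞`). -/
def cylWeightSup (T : ∀ k, X k → X (k + 1)) (f : ∀ k, X k → ℝ) (s : ℝ) (n : ℕ)
    (v : ∀ j, Set (X j)) : ℝ≥0∞ :=
  ⨆ x ∈ cylinder T n v, ENNReal.ofReal (Real.exp (-(n : ℝ) * s + birk T f n x))

/-- `𝔐^s_N(T,f,Z,𝒰)`: infimum over countable families of strings of length `≥ N` covering `Z`. -/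
def bppPre (T : ∀ k, X k → X (k + 1)) (f : ∀ k, X k → ℝ) (Z : Set (X 0)) (s : ℝ) (N : ℕ)
    (𝒰 : CoverSeq X) : ℝ≥0∞ :=
  ⨅ (Γ : Set ((∀ j, Set (X j)) × ℕ))
    (_ : Γ.Countable ∧ (∀ p ∈ Γ, N ≤ p.2 ∧ ∀ j < p.2, p.1 j ∈ 𝒰.mem j) ∧
      Z ⊆ ⋃ p ∈ Γ, cylinder T p.2 p.1),
    ∑' p : Γ, cylWeightSup T f s p.1.2 p.1.1

/-- `𝔐^s(T,f,Z,𝒰) = lim_{N→∞} 𝔐^s_N(T,f,Z,𝒰)` (an increasing limit, i.e. a supremum). -/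
def bppMeas (T : ∀ k, X k → X (k + 1)) (f : ∀ k, X k → ℝ) (Z : Set (X 0)) (s : ℝ)
    (𝒰 : CoverSeq X) : ℝ≥0∞ :=
  ⨆ N : ℕ, bppPre T f Z s N 𝒰

/-- The open-cover Bowen pressure `P^{BPP}(T,f,Z,𝒰)`. -/
def PBPP (T : ∀ k, X k → X (k + 1)) (f : ∀ k, X k → ℝ) (Z : Set (X 0))
    (𝒰 : CoverSeq X) : EReal :=
  crit fun s => bppMeas T f Z s 𝒰

end NDS
namespace NDSAux

open NDS Filter Set
open scoped ENNReal NNReal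

/-- Sum over the range of a map is at most the sum over the domain (ENNReal). -/
lemma tsum_range_le {α β : Type*} (m : α → β) (w : β → ℝ≥0∞) :
    ∑' b : Set.range m, w b ≤ ∑' a, w (m a) := by
  have hpt : ∀ b : Set.range m, ∃ a, m a = (b : β) := fun b => b.2
  choose g hg using hpt
  have hinj : Function.Injective g := by
    intro b1 b2 h
    apply Subtype.ext
    rw [← hg b1, ← hg b2, h]
  calc ∑' b : Set.range m, w b = ∑' b : Set.range m, w (m (g b)) := by
        apply tsum_congr; intro b; rw [hg]
    _ ≤ ∑' a, w (m a) := ENNReal.tsum_comp_le_tsum_of_injective hinj _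

variable {X : ℕ → Type*} [∀ k, MetricSpace (X k)]

lemma dist_iter_le (T : ∀ k, X k → X (k + 1)) {j n : ℕ} (hj : j < n) (x y : X 0) :
    dist (iter T j x) (iter T j y) ≤ bowenDist T n x y := by
  have : nndist (iter T j x) (iter T j y) ≤
      (Finset.range n).sup fun j => nndist (iter T j x) (iter T j y) :=
    Finset.le_sup (f := fun j => nndist (iter T j x) (iter T j y)) (Finset.mem_range.2 hj)
  exact_mod_cast this

lemma bowenDist_lt_of (T : ∀ k, X k → X (k + 1)) {n : ℕ} {x y : X 0} {ε : ℝ} (hε : 0 < ε)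
    (h : ∀ j < n, dist (iter T j x) (iter T j y) < ε) : bowenDist T n x y < ε := by
  have h0 : (0 : ℝ≥0) < ε.toNNReal := Real.toNNReal_pos.2 hε
  have hsup : ((Finset.range n).sup fun j => nndist (iter T j x) (iter T j y)) < ε.toNNReal := by
    rw [Finset.sup_lt_iff h0]
    intro j hj
    have hd := h j (Finset.mem_range.1 hj)
    rw [← NNReal.coe_lt_coe, coe_nndist, Real.coe_toNNReal ε hε.le]
    exact hd
  have hc := NNReal.coe_lt_coe.2 hsup
  rw [Real.coe_toNNReal ε hε.le] at hc
  exact hc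

lemma diam_le_coverDiam {𝒰 : CoverSeq X} {k : ℕ} {u : Set (X k)} (hu : u ∈ 𝒰.mem k) :
    EMetric.diam u ≤ coverDiam 𝒰 :=
  le_trans (le_biSup _ hu) (le_iSup (fun k => ⨆ u ∈ 𝒰.mem k, EMetric.diam u) k)

lemma dist_lt_of_mem {𝒰 : CoverSeq X} {k : ℕ} {u : Set (X k)} (hu : u ∈ 𝒰.mem k)
    {η : ℝ} (hd : coverDiam 𝒰 < ENNReal.ofReal η) {x y : X k} (hx : x ∈ u) (hy : y ∈ u) :
    dist x y < η := by
  have : edist x y < ENNReal.ofReal η :=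
    lt_of_le_of_lt (le_trans (EMetric.edist_le_diam_of_mem hx hy) (diam_le_coverDiam hu)) hd
  exact edist_lt_ofReal.1 this

set_option maxHeartbeats 2000000 in
/-- Key inequality I: covers by strings yield Bowen-ball covers. -/
lemma bowenPreMeas_le_bppPre (T : ∀ k, X k → X (k + 1)) (f : ∀ k, X k → ℝ) (Z : Set (X 0))
    {ε : ℝ} (hε : 0 < ε) {𝒰 : CoverSeq X} (hd : coverDiam 𝒰 < ENNReal.ofReal ε)
    (s : ℝ) (N : ℕ) :
    bowenPreMeas T f Z s N ε ≤ bppPre T f Z s N 𝒰 := by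
  refine le_iInf₂ fun Γ hΓ => ?_
  obtain ⟨hc, hmem, hcov⟩ := hΓ
  classical
  set Γ' : Set ((∀ j, Set (X j)) × ℕ) := {p ∈ Γ | (cylinder T p.2 p.1).Nonempty} with hΓ'def
  have hsub : Γ' ⊆ Γ := fun p hp => hp.1
  have hpt : ∀ p : Γ', ∃ x, x ∈ cylinder T (p : (∀ j, Set (X j)) × ℕ).2
      (p : (∀ j, Set (X j)) × ℕ).1 := fun p => p.2.2
  choose pt hptmem using hpt
  set m : Γ' → X 0 × ℕ := fun p => (pt p, (p : (∀ j, Set (X j)) × ℕ).2) with hmdef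
  set C : Set (X 0 × ℕ) := Set.range m with hCdef
  have hC : IsBowenCover T N ε Z C := by
    refine ⟨?_, ?_, ?_⟩
    · haveI := (hc.mono hsub).to_subtype
      exact Set.countable_range m
    · rintro q ⟨p, rfl⟩
      exact (hmem _ (hsub p.2)).1
    · intro z hz
      obtain ⟨p, hp, hzp⟩ := Set.mem_iUnion₂.1 (hcov hz)
      have hp' : p ∈ Γ' := ⟨hp, ⟨z, hzp⟩⟩
      refine Set.mem_iUnion₂.2 ⟨m ⟨p, hp'⟩, Set.mem_range_self _, ?_⟩
      show bowenDist T p.2 (pt ⟨p, hp'⟩) z < ε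
      refine bowenDist_lt_of T hε fun j hj => ?_
      have hu : p.1 j ∈ 𝒰.mem j := (hmem p hp).2 j hj
      have hxj : iter T j (pt ⟨p, hp'⟩) ∈ p.1 j := by
        have := hptmem ⟨p, hp'⟩
        exact Set.mem_iInter₂.1 this j hj
      have hzj : iter T j z ∈ p.1 j := Set.mem_iInter₂.1 hzp j hj
      exact dist_lt_of_mem hu hd hxj hzj
  refine le_trans (iInf₂_le C hC) ?_
  calc ballSum T f s C
      ≤ ∑' p : Γ', ENNReal.ofReal
          (Real.exp (-(((m p).2 : ℕ) : ℝ) * s + birk T f (m p).2 (m p).1)) :=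
        tsum_range_le m (fun q : X 0 × ℕ =>
          ENNReal.ofReal (Real.exp (-(q.2 : ℝ) * s + birk T f q.2 q.1)))
    _ ≤ ∑' p : Γ', cylWeightSup T f s (p : (∀ j, Set (X j)) × ℕ).2
          (p : (∀ j, Set (X j)) × ℕ).1 := by
        refine ENNReal.tsum_le_tsum fun p => ?_
        have h := le_biSup (fun x : X 0 => ENNReal.ofReal
          (Real.exp (-((p : (∀ j, Set (X j)) × ℕ).2 : ℝ) * s
            + birk T f (p : (∀ j, Set (X j)) × ℕ).2 x))) (hptmem p)
        exact h
    _ ≤ ∑' p : Γ, cylWeightSup T f s (p : (∀ j, Set (X j)) × ℕ).2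
          (p : (∀ j, Set (X j)) × ℕ).1 := by
        have h := ENNReal.tsum_mono_subtype
          (fun q : ((∀ j, Set (X j)) × ℕ) => cylWeightSup T f s q.2 q.1) hsub
        exact h

/-- Key inequality II: Bowen-ball covers yield string covers, at the price of `γ` in pressure. -/
lemma bppPre_le_bowenPreMeas (T : ∀ k, X k → X (k + 1)) (f : ∀ k, X k → ℝ) (Z : Set (X 0))
    {δ γ δf : ℝ} (hδ : 0 < δ) {𝒰 : CoverSeq X}
    (hLeb : ∀ k, ∀ x : X k, ∃ u ∈ 𝒰.mem k, Metric.ball x δ ⊆ u)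
    (hmod : ∀ k, ∀ x y : X k, dist x y < δf → |f k x - f k y| < γ)
    (hd : coverDiam 𝒰 < ENNReal.ofReal δf) (s : ℝ) (N : ℕ) :
    bppPre T f Z (s + γ) N 𝒰 ≤ bowenPreMeas T f Z s N δ := by
  refine le_iInf₂ fun C hC => ?_
  obtain ⟨hc, hmem, hcov⟩ := hC
  classical
  choose u hu hball using hLeb
  set v : X 0 × ℕ → ∀ j, Set (X j) :=
    fun p j => if j < p.2 then u j (iter T j p.1) else Set.univ with hvdef
  set m : C → (∀ j, Set (X j)) × ℕ := fun p => (v p, (p : X 0 × ℕ).2) with hmdef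
  set Γ : Set ((∀ j, Set (X j)) × ℕ) := Set.range m with hΓdef
  have hvmem : ∀ (p : X 0 × ℕ), ∀ j < p.2, v p j ∈ 𝒰.mem j := by
    intro p j hj
    simp only [hvdef, if_pos hj]
    exact hu j (iter T j p.1)
  have hGood : (Γ.Countable ∧ (∀ q ∈ Γ, N ≤ q.2 ∧ ∀ j < q.2, q.1 j ∈ 𝒰.mem j) ∧
      Z ⊆ ⋃ q ∈ Γ, cylinder T q.2 q.1) := by
    refine ⟨?_, ?_, ?_⟩
    · haveI := hc.to_subtype
      exact Set.countable_range m
    · rintro q ⟨p, rfl⟩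
      exact ⟨hmem _ p.2, hvmem p⟩
    · intro z hz
      obtain ⟨p, hp, hzp⟩ := Set.mem_iUnion₂.1 (hcov hz)
      refine Set.mem_iUnion₂.2 ⟨m ⟨p, hp⟩, Set.mem_range_self _, ?_⟩
      refine Set.mem_iInter₂.2 fun j hj => ?_
      have hdist : dist (iter T j p.1) (iter T j z) < δ :=
        lt_of_le_of_lt (dist_iter_le T hj p.1 z) hzp
      show iter T j z ∈ v p j
      simp only [hvdef, if_pos hj]
      rw [if_pos hj]
      exact hball j (iter T j p.1) (by rw [Metric.mem_ball, dist_comm]; exact hdist)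
  refine le_trans (iInf₂_le Γ hGood) ?_
  have hkey : ∀ p : C, cylWeightSup T f (s + γ) (p : X 0 × ℕ).2 (v p) ≤
      ENNReal.ofReal (Real.exp (-(((p : X 0 × ℕ).2 : ℕ) : ℝ) * s
        + birk T f (p : X 0 × ℕ).2 (p : X 0 × ℕ).1)) := by
    rintro ⟨p, hp⟩
    refine iSup₂_le fun y hy => ?_
    apply ENNReal.ofReal_le_ofReal
    apply Real.exp_le_exp.2
    have hb : birk T f p.2 y ≤ birk T f p.2 p.1 + p.2 * γ := by
      have hterm : ∀ j ∈ Finset.range p.2,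
          f j (iter T j y) ≤ f j (iter T j p.1) + γ := by
        intro j hj
        have hj' := Finset.mem_range.1 hj
        have hyj : iter T j y ∈ v p j := Set.mem_iInter₂.1 hy j hj'
        have hxj : iter T j p.1 ∈ v p j := by
          simp only [hvdef, if_pos hj']
          exact hball j (iter T j p.1) (Metric.mem_ball_self hδ)
        rw [hvdef] at hyj
        simp only [if_pos hj'] at hyj
        have hvm : v p j ∈ 𝒰.mem j := hvmem p j hj'
        have hdy : dist (iter T j y) (iter T j p.1) < δf := by
          refine dist_lt_of_mem hvm hd ?_ hxj
          exact Set.mem_iInter₂.1 hy j hj'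
        have := hmod j (iter T j y) (iter T j p.1) hdy
        have := abs_lt.1 this
        linarith [this.2]
      calc birk T f p.2 y = ∑ j ∈ Finset.range p.2, f j (iter T j y) := rfl
        _ ≤ ∑ j ∈ Finset.range p.2, (f j (iter T j p.1) + γ) := Finset.sum_le_sum hterm
        _ = birk T f p.2 p.1 + p.2 * γ := by
            rw [Finset.sum_add_distrib, Finset.sum_const, Finset.card_range]
            simp [birk, nsmul_eq_mul]
    have : -(p.2 : ℝ) * (s + γ) + birk T f p.2 y
        = -(p.2 : ℝ) * s + (birk T f p.2 y - p.2 * γ) := by ring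
    rw [this]
    linarith [hb]
  calc ∑' q : Γ, cylWeightSup T f (s + γ) (q : (∀ j, Set (X j)) × ℕ).2
        (q : (∀ j, Set (X j)) × ℕ).1
      ≤ ∑' p : C, cylWeightSup T f (s + γ) (m p).2 (m p).1 :=
        tsum_range_le m (fun q : ((∀ j, Set (X j)) × ℕ) => cylWeightSup T f (s + γ) q.2 q.1)
    _ ≤ ballSum T f s C := ENNReal.tsum_le_tsum hkey

/-- Monotonicity of the critical value. -/
lemma crit_le_crit {M M' : ℝ → ℝ≥0∞} (h : ∀ s, M s ≤ M' s) : crit M ≤ crit M' := by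
  apply sInf_le_sInf
  apply Set.image_mono
  intro s hs
  simpa using le_antisymm (le_trans (h s) (le_of_eq hs)) zero_le

/-- The order isomorphism `x ↦ x + γ` on `EReal`, for real `γ`. -/
def addCoeIso (γ : ℝ) : EReal ≃o EReal where
  toFun x := x + (γ : EReal)
  invFun x := x - (γ : EReal)
  left_inv a := EReal.add_sub_cancel_right
  right_inv a := EReal.sub_add_cancel
  map_rel_iff' := @fun a b => (EReal.addLECancellable_coe γ).add_le_add_iff_right

lemma crit_le_crit_add {M M' : ℝ → ℝ≥0∞} (γ : ℝ) (h : ∀ s, M s = 0 → M' (s + γ) = 0) :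
    crit M' ≤ crit M + (γ : EReal) := by
  have heq : crit M + (γ : EReal)
      = ⨅ a ∈ Real.toEReal '' {s : ℝ | M s = 0}, (a + (γ : EReal)) :=
    (addCoeIso γ).map_sInf _
  rw [heq]
  refine le_iInf₂ fun a ha => ?_
  obtain ⟨t, ht, rfl⟩ := ha
  have : ((t : ℝ) : EReal) + (γ : EReal) = ((t + γ : ℝ) : EReal) := by
    rw [EReal.coe_add]
  rw [this]
  exact sInf_le ⟨t + γ, h t ht, rfl⟩

end NDSAux

open NDS NDSAux Filter Set
open scoped ENNReal NNReal

/-- For an equicontinuous potential `f`, the Bowen pressure is the limit, as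
`diam 𝒰 → 0` over sequences of open covers `𝒰` with a Lebesgue number, of the open-cover Bowen
pressure `P^{BPP}(T,f,Z,𝒰)`. -/
theorem bowen_pressure_via_open_covers {X : ℕ → Type*} [∀ k, MetricSpace (X k)]
    [∀ k, CompactSpace (X k)] (T : ∀ k, X k → X (k + 1)) (hT : ∀ k, Continuous (T k))
    (f : ∀ k, X k → ℝ) (hf : ∀ k, Continuous (f k)) (hfe : NDS.EquicontPotential f)
    (Z : Set (X 0)) :
    Filter.Tendsto (fun 𝒰 : {𝒰 : NDS.CoverSeq X // NDS.HasLebesgueNumber 𝒰} =>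
        NDS.PBPP T f Z 𝒰.1)
      (Filter.comap (fun 𝒰 : {𝒰 : NDS.CoverSeq X // NDS.HasLebesgueNumber 𝒰} =>
        NDS.coverDiam 𝒰.1) (nhds 0)) (nhds (NDS.PB T f Z)) := by
  rw [tendsto_order]
  constructor
  · intro a ha
    rw [NDS.PB, lt_iSup_iff] at ha
    obtain ⟨ε, ha⟩ := ha
    rw [lt_iSup_iff] at ha
    obtain ⟨hε, ha⟩ := ha
    have hmem := Filter.preimage_mem_comap
      (m := fun 𝒰 : {𝒰 : NDS.CoverSeq X // NDS.HasLebesgueNumber 𝒰} => NDS.coverDiam 𝒰.1)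
      (Iio_mem_nhds (ENNReal.ofReal_pos.2 hε))
    filter_upwards [hmem] with 𝒰 h𝒰
    have h𝒰' : NDS.coverDiam 𝒰.1 < ENNReal.ofReal ε := h𝒰
    refine lt_of_lt_of_le ha ?_
    apply NDSAux.crit_le_crit
    intro t
    exact iSup_mono fun N => NDSAux.bowenPreMeas_le_bppPre T f Z hε h𝒰' t N
  · intro b hb
    obtain ⟨x, hx1, hx2⟩ := EReal.lt_iff_exists_real_btwn.1 hb
    obtain ⟨y, hy1, hy2⟩ := EReal.lt_iff_exists_real_btwn.1 hx1
    have hγ : 0 < x - y := by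
      have := EReal.coe_lt_coe_iff.1 hy2
      linarith
    have hlt : NDS.PB T f Z + ((x - y : ℝ) : EReal) < b := by
      calc NDS.PB T f Z + ((x - y : ℝ) : EReal)
          ≤ (y : EReal) + ((x - y : ℝ) : EReal) := add_le_add hy1.le le_rfl
        _ = (x : EReal) := by rw [← EReal.coe_add]; norm_num
        _ < b := hx2
    obtain ⟨δf, hδf, hmod⟩ := hfe (x - y) hγ
    have hmem := Filter.preimage_mem_comap
      (m := fun 𝒰 : {𝒰 : NDS.CoverSeq X // NDS.HasLebesgueNumber 𝒰} => NDS.coverDiam 𝒰.1)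
      (Iio_mem_nhds (ENNReal.ofReal_pos.2 hδf))
    filter_upwards [hmem] with 𝒰 h𝒰
    have h𝒰' : NDS.coverDiam 𝒰.1 < ENNReal.ofReal δf := h𝒰
    obtain ⟨δ, hδ, hLeb⟩ := 𝒰.2
    have h1 : NDS.PBPP T f Z 𝒰.1 ≤ NDS.PBe T f Z δ + ((x - y : ℝ) : EReal) := by
      apply NDSAux.crit_le_crit_add
      intro t ht
      have hle : NDS.bppMeas T f Z (t + (x - y)) 𝒰.1 ≤ NDS.bowenMeas T f Z t δ :=
        iSup_mono fun N => NDSAux.bppPre_le_bowenPreMeas T f Z hδ hLeb hmod h𝒰' t N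
      rw [ht] at hle
      exact le_antisymm hle zero_le
    have h2 : NDS.PBe T f Z δ ≤ NDS.PB T f Z :=
      le_iSup₂_of_le δ hδ le_rfl
    calc NDS.PBPP T f Z 𝒰.1 ≤ NDS.PBe T f Z δ + ((x - y : ℝ) : EReal) := h1
      _ ≤ NDS.PB T f Z + ((x - y : ℝ) : EReal) := add_le_add h2 le_rfl
      _ < b := hlt
end
end

section
/- Let (X,T) be an NDS, Z ⊂ X_0, and let f be an equicontinuous potential. Then the Bowen pressure equals the weighted-cover pressure: P^B(T,f,Z) = lim_{ε→0} P^{BW}(T,f,Z,ε), where P^{BW}(T,f,Z,ε) = inf{s : 𝒲^s_ε(T,f,Z)=0} = sup{s : 𝒲^s_ε(T,f,Z)=+∞} and 𝒲^s_ε is defined from weighted covers as below. -/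
open Filter Set
open scoped ENNReal NNReal

noncomputable section

namespace NDS

variable {X : ℕ → Type*} [∀ k, MetricSpace (X k)]

/-- `{(B_{n i}^T(x i, ε), c i)}_{i : ι}` is a weighted `(N,ε)`-cover of `Z`: the weights are
positive, the orders are `≥ N`, and `Σ_i c_i χ_{B_i} ≥ χ_Z` pointwise. -/
def IsWeightedCover (T : ∀ k, X k → X (k + 1)) (N : ℕ) (ε : ℝ) (Z : Set (X 0))
    {ι : Type} (x : ι → X 0) (n : ι → ℕ) (c : ι → ℝ) : Prop :=
  (∀ i, 0 < c i) ∧ (∀ i, N ≤ n i) ∧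
    ∀ z ∈ Z, (1 : ℝ≥0∞) ≤
      ∑' i, (bowenBall T (n i) (x i) ε).indicator (fun _ => ENNReal.ofReal (c i)) z

/-- `𝒲^s_{N,ε}(T,f,Z)`: infimum of `Σ_i c_i exp(-n_i s + S_{n_i}^T f(x_i))` over all countable
weighted `(N,ε)`-covers of `Z`. -/
def wMeasPre (T : ∀ k, X k → X (k + 1)) (f : ∀ k, X k → ℝ) (Z : Set (X 0))
    (s : ℝ) (N : ℕ) (ε : ℝ) : ℝ≥0∞ :=
  ⨅ (ι : Type) (_ : Countable ι) (x : ι → X 0) (n : ι → ℕ) (c : ι → ℝ)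
    (_ : IsWeightedCover T N ε Z x n c),
    ∑' i, ENNReal.ofReal (c i) *
      ENNReal.ofReal (Real.exp (-(n i : ℝ) * s + birk T f (n i) (x i)))

/-- `𝒲^s_ε(T,f,Z) = lim_{N→∞} 𝒲^s_{N,ε}(T,f,Z)` (an increasing limit, i.e. a supremum). -/
def wMeas (T : ∀ k, X k → X (k + 1)) (f : ∀ k, X k → ℝ) (Z : Set (X 0))
    (s : ℝ) (ε : ℝ) : ℝ≥0∞ :=
  ⨆ N : ℕ, wMeasPre T f Z s N ε

/-- The weighted-cover pressure `P^{BW}(T,f,Z,ε)`. -/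
def PBW (T : ∀ k, X k → X (k + 1)) (f : ∀ k, X k → ℝ) (Z : Set (X 0)) (ε : ℝ) : EReal :=
  crit fun s => wMeas T f Z s ε

end NDS
namespace NDSAux

open NDS

lemma ereal_le_of_forall_add {a b : EReal} (h : ∀ d : ℝ, 0 < d → a ≤ b + (d : EReal)) :
    a ≤ b := by
  induction b using EReal.rec with
  | bot =>
    have := h 1 one_pos
    simpa using this
  | coe t =>
    induction a using EReal.rec with
    | bot => exact bot_le
    | coe s =>
      have : s ≤ t := by
        refine le_of_forall_pos_le_add fun d hd => ?_
        have := h d hd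
        exact_mod_cast this
      exact_mod_cast this
    | top =>
      have := h 1 one_pos
      have h2 : (↑t + (1:ℝ) : EReal) < ⊤ := by
        rw [show ((↑t + ((1:ℝ):EReal)) : EReal) = ((t + 1 : ℝ) : EReal) by norm_cast]
        exact EReal.coe_lt_top _
      exact absurd this (not_le.mpr h2)
  | top => exact le_top

lemma ereal_sInf_add (S : Set EReal) (d : ℝ) :
    sInf ((fun x => x + (d : EReal)) '' S) = sInf S + (d : EReal) := by
  have key : ∀ (T : Set EReal) (c : ℝ), sInf T + (c : EReal) ≤ sInf ((fun x => x + (c : EReal)) '' T) := by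
    intro T c
    refine le_sInf fun y hy => ?_
    obtain ⟨x, hx, rfl⟩ := hy
    exact add_le_add (sInf_le hx) le_rfl
  refine le_antisymm ?_ (key S d)
  have h2 := key ((fun x => x + (d : EReal)) '' S) (-d)
  have himg : (fun x => x + ((-d : ℝ) : EReal)) '' ((fun x => x + (d : EReal)) '' S) = S := by
    rw [Set.image_image]
    have : ∀ x : EReal, x + (d : EReal) + ((-d : ℝ) : EReal) = x := by
      intro x
      induction x using EReal.rec with
      | bot => simp
      | coe x => norm_cast; ring
      | top => simp
    simp only [this, Set.image_id']
  rw [himg] at h2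
  have h3 := add_le_add h2 (le_refl (d : EReal))
  have hcan : ∀ x : EReal, x + ((-d : ℝ) : EReal) + (d : EReal) = x := by
    intro x
    induction x using EReal.rec with
    | bot => simp
    | coe x => norm_cast; ring
    | top => simp
  rwa [hcan] at h3

lemma crit_anti {M M' : ℝ → ℝ≥0∞} (h : ∀ s, M s = 0 → M' s = 0) :
    crit M' ≤ crit M :=
  sInf_le_sInf (Set.image_mono fun s hs => h s hs)

lemma crit_shift {M M' : ℝ → ℝ≥0∞} (d : ℝ) (h : ∀ s, M s = 0 → M' (s + d) = 0) :
    crit M' ≤ crit M + (d : EReal) := by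
  have hsub : (fun s => s + d) '' {s | M s = 0} ⊆ {s | M' s = 0} := by
    rintro _ ⟨s, hs, rfl⟩
    exact h s hs
  have h1 : crit M' ≤ sInf (Real.toEReal '' ((fun s => s + d) '' {s | M s = 0})) :=
    sInf_le_sInf (Set.image_mono hsub)
  have h2 : Real.toEReal '' ((fun s => s + d) '' {s | M s = 0}) =
      (fun x => x + (d : EReal)) '' (Real.toEReal '' {s | M s = 0}) := by
    rw [Set.image_image, Set.image_image]
    exact Set.image_congr fun s _ => by norm_cast
  rw [h2, ereal_sInf_add] at h1
  exact h1

section Metric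

variable {X : ℕ → Type*} [∀ k, MetricSpace (X k)] (T : ∀ k, X k → X (k + 1))

lemma bowenDist_nonneg (n : ℕ) (x y : X 0) : 0 ≤ bowenDist T n x y :=
  NNReal.coe_nonneg _

lemma bowenDist_self (n : ℕ) (x : X 0) : bowenDist T n x x = 0 := by
  simp [bowenDist]

lemma bowenDist_comm (n : ℕ) (x y : X 0) : bowenDist T n x y = bowenDist T n y x := by
  simp [bowenDist, nndist_comm]

lemma bowenDist_triangle (n : ℕ) (x y z : X 0) :
    bowenDist T n x z ≤ bowenDist T n x y + bowenDist T n y z := by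
  rw [bowenDist, bowenDist, bowenDist, ← NNReal.coe_add, NNReal.coe_le_coe]
  refine Finset.sup_le fun j hj => ?_
  exact le_trans (nndist_triangle _ (iter T j y) _)
    (add_le_add (Finset.le_sup (f := fun j => nndist (iter T j x) (iter T j y)) hj)
      (Finset.le_sup (f := fun j => nndist (iter T j y) (iter T j z)) hj))

lemma dist_iter_le_bowenDist {n j : ℕ} (hj : j < n) (x y : X 0) :
    dist (iter T j x) (iter T j y) ≤ bowenDist T n x y := by
  rw [dist_nndist, bowenDist, NNReal.coe_le_coe]
  exact Finset.le_sup (f := fun j => nndist (iter T j x) (iter T j y)) (Finset.mem_range.mpr hj)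

lemma birk_le_birk_add (f : ∀ k, X k → ℝ) {η ε : ℝ}
    (hobs : ∀ k, ∀ x y : X k, dist x y < ε → |f k x - f k y| ≤ η)
    {m : ℕ} {x y : X 0} (h : bowenDist T m x y < ε) :
    birk T f m y ≤ birk T f m x + m * η := by
  have hterm : ∀ j ∈ Finset.range m, f j (iter T j y) ≤ f j (iter T j x) + η := by
    intro j hj
    have hd : dist (iter T j y) (iter T j x) < ε := by
      rw [dist_comm]
      exact lt_of_le_of_lt (dist_iter_le_bowenDist T (Finset.mem_range.mp hj) x y) h
    have := hobs j (iter T j y) (iter T j x) hd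
    have := abs_le.mp this
    linarith [this.1, this.2]
  calc birk T f m y ≤ ∑ j ∈ Finset.range m, (f j (iter T j x) + η) :=
        Finset.sum_le_sum hterm
    _ = birk T f m x + m * η := by
        rw [Finset.sum_add_distrib, birk]
        simp [mul_comm]

end Metric

section Easy

variable {X : ℕ → Type*} [∀ k, MetricSpace (X k)] (T : ∀ k, X k → X (k + 1))
  (f : ∀ k, X k → ℝ) (Z : Set (X 0))

lemma wMeasPre_le_bowenPreMeas (s : ℝ) (N : ℕ) (ε : ℝ) :
    wMeasPre T f Z s N ε ≤ bowenPreMeas T f Z s N ε := by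
  refine le_iInf₂ fun C hC => ?_
  obtain ⟨hCc, hCN, hCcov⟩ := hC
  have : Countable ↥C := hCc.to_subtype
  obtain ⟨g, hg⟩ := exists_injective_nat ↥C
  let e : ↥(Set.range g) ≃ ↥C := (Equiv.ofInjective g hg).symm
  let xf : ↥(Set.range g) → X 0 := fun i => (e i).1.1
  let nf : ↥(Set.range g) → ℕ := fun i => (e i).1.2
  have hwc : IsWeightedCover T N ε Z xf nf fun _ => 1 := by
    refine ⟨fun _ => one_pos, fun i => hCN (e i).1 (e i).2, fun z hz => ?_⟩
    obtain ⟨p, hpC, hzp⟩ := Set.mem_iUnion₂.mp (hCcov hz)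
    refine le_trans ?_ (ENNReal.le_tsum (e.symm ⟨p, hpC⟩))
    have he : e (e.symm ⟨p, hpC⟩) = ⟨p, hpC⟩ := e.apply_symm_apply _
    have hnf : nf (e.symm ⟨p, hpC⟩) = p.2 := by simp only [nf, he]
    have hxf : xf (e.symm ⟨p, hpC⟩) = p.1 := by simp only [xf, he]
    rw [hnf, hxf, Set.indicator_of_mem hzp]
    simp
  refine le_trans (iInf_le _ ↥(Set.range g)) ?_
  refine le_trans (iInf_le _ (Set.countable_range g).to_subtype) ?_
  refine le_trans (iInf_le _ xf) ?_
  refine le_trans (iInf_le _ nf) ?_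
  refine le_trans (iInf_le _ fun _ => (1:ℝ)) ?_
  refine le_trans (iInf_le _ hwc) ?_
  rw [ballSum, ← e.tsum_eq]
  refine le_of_eq (tsum_congr fun i => ?_)
  simp [xf, nf]

lemma wMeas_le_bowenMeas (s ε : ℝ) : wMeas T f Z s ε ≤ bowenMeas T f Z s ε :=
  iSup_mono fun N => wMeasPre_le_bowenPreMeas T f Z s N ε

lemma PBW_le_PBe (ε : ℝ) : PBW T f Z ε ≤ PBe T f Z ε :=
  crit_anti fun s hs => le_antisymm (hs ▸ wMeas_le_bowenMeas T f Z s ε) (zero_le)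

lemma bowenPreMeas_anti {ε ε' : ℝ} (h : ε ≤ ε') (s : ℝ) (N : ℕ) :
    bowenPreMeas T f Z s N ε' ≤ bowenPreMeas T f Z s N ε := by
  refine le_iInf₂ fun C hC => ?_
  have hC' : IsBowenCover T N ε' Z C := by
    refine ⟨hC.1, hC.2.1, hC.2.2.trans ?_⟩
    refine Set.iUnion₂_mono fun p _ => fun y hy => lt_of_lt_of_le hy h
  exact iInf₂_le C hC'

lemma PBe_anti {ε ε' : ℝ} (h : ε ≤ ε') : PBe T f Z ε' ≤ PBe T f Z ε := by
  refine crit_anti fun s hs => le_antisymm ?_ (zero_le)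
  calc bowenMeas T f Z s ε' ≤ bowenMeas T f Z s ε :=
        iSup_mono fun N => bowenPreMeas_anti T f Z h s N
    _ = 0 := hs

end Easy

section Key

variable {X : ℕ → Type*} [∀ k, MetricSpace (X k)] (T : ∀ k, X k → X (k + 1))
  (f : ∀ k, X k → ℝ)

lemma key_estimate (Z : Set (X 0)) (s δ ε : ℝ) (hδ : 0 < δ) (hε : 0 < ε)
    (hobs : ∀ k, ∀ x y : X k, dist x y < ε → |f k x - f k y| ≤ δ / 2)
    (N : ℕ) {ι : Type} [Countable ι] (x : ι → X 0) (n : ι → ℕ) (c : ι → ℝ)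
    (hwc : IsWeightedCover T N ε Z x n c) :
    bowenPreMeas T f Z (s + δ) N (6 * ε) ≤
      (1 - ENNReal.ofReal (Real.exp (-(δ / 2))))⁻¹ *
        ∑' i, ENNReal.ofReal (c i) *
          ENNReal.ofReal (Real.exp (-(n i : ℝ) * s + birk T f (n i) (x i))) := by
  obtain ⟨hcpos, hnN, hcov⟩ := hwc
  set η := δ / 2 with hηdef
  have hηpos : 0 < η := half_pos hδ
  set r : ℝ≥0∞ := ENNReal.ofReal (Real.exp (-η)) with hrdef
  have hr1 : r < 1 := by
    rw [hrdef, ← ENNReal.ofReal_one]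
    exact (ENNReal.ofReal_lt_ofReal_iff one_pos).mpr
      (Real.exp_lt_one_iff.mpr (neg_neg_iff_pos.mpr hηpos))
  have hr0 : r ≠ 0 := (ENNReal.ofReal_pos.mpr (Real.exp_pos _)).ne'
  have hrtop : r ≠ ⊤ := ENNReal.ofReal_ne_top
  have h1r0 : (1 : ℝ≥0∞) - r ≠ 0 := (tsub_pos_of_lt hr1).ne'
  have h1rtop : (1 : ℝ≥0∞) - r ≠ ⊤ := ne_top_of_le_ne_top ENNReal.one_ne_top tsub_le_self
  set K : ℝ≥0∞ := ((1 : ℝ≥0∞) - r)⁻¹ with hKdef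
  have hcancel : ((1 : ℝ≥0∞) - r) * K = 1 := ENNReal.mul_inv_cancel h1r0 h1rtop
  set a : ℕ → ℝ≥0∞ := fun m => ((1 : ℝ≥0∞) - r) * r ^ (m - N) with hadef
  have ha0 : ∀ m, a m ≠ 0 := fun m => mul_ne_zero h1r0 (pow_ne_zero _ hr0)
  have hatop : ∀ m, a m ≠ ⊤ :=
    fun m => ENNReal.mul_ne_top h1rtop (ENNReal.pow_ne_top hrtop)
  set g : ι → X 0 → ℝ≥0∞ :=
    fun i z => (bowenBall T (n i) (x i) ε).indicator (fun _ => ENNReal.ofReal (c i)) z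
    with hgdef
  set sm : ℕ → X 0 → ℝ≥0∞ := fun m z => ∑' i : {i // n i = m}, g i.1 z with hsmdef
  -- decomposition of the total weight into strata
  have hdecomp : ∀ z, ∑' i, g i z = ∑' m, sm m z := by
    intro z
    calc ∑' i, g i z
        = ∑' p : Σ m, {i // n i = m}, g ((Equiv.sigmaFiberEquiv n) p) z :=
          ((Equiv.sigmaFiberEquiv n).tsum_eq fun i => g i z).symm
      _ = ∑' m, sm m z := ENNReal.tsum_sigma' _
  have hσempty : ∀ m, m < N → IsEmpty {i // n i = m} := by
    intro m hm
    exact ⟨fun i => absurd (i.2 ▸ hnN i.1) (by omega)⟩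
  have hsm0 : ∀ m, m < N → ∀ z, sm m z = 0 := by
    intro m hm z
    have := hσempty m hm
    exact tsum_empty
  -- the sum of the thresholds is 1
  have hatsum : ∑' m : ℕ, (if m < N then 0 else a m) = 1 := by
    have hinj : Function.Injective (fun k : ℕ => N + k) := fun a b h => by
      simp only [] at h; omega
    have hsupp : Function.support (fun m => if m < N then 0 else a m) ⊆
        Set.range (fun k : ℕ => N + k) := by
      intro m hm
      rcases lt_or_ge m N with h | h
      · simp [h] at hm
      · exact ⟨m - N, by show N + (m - N) = m; omega⟩
    rw [← hinj.tsum_eq hsupp]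
    have : ∀ k : ℕ, (if N + k < N then 0 else a (N + k)) = ((1 : ℝ≥0∞) - r) * r ^ k := by
      intro k
      rw [if_neg (by omega), hadef]
      simp only [Nat.add_sub_cancel_left]
    rw [tsum_congr this, ENNReal.tsum_mul_left, ENNReal.tsum_geometric, hcancel]
  -- pigeonhole: each z ∈ Z lies in some stratum set
  have hex : ∀ z ∈ Z, ∃ m, N ≤ m ∧ a m ≤ sm m z := by
    intro z hz
    by_contra hcon
    push_neg at hcon
    have hlt : ∀ m, sm m z ≤ (if m < N then 0 else a m) := by
      intro m
      rcases lt_or_ge m N with h | h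
      · rw [if_pos h, hsm0 m h z]
      · simp only [if_neg (not_lt.mpr h)]
        exact (hcon m h).le
    have hN : sm N z < (if N < N then 0 else a N) := by
      rw [if_neg (lt_irrefl N)]
      exact hcon N le_rfl
    have h1 : (1 : ℝ≥0∞) ≤ ∑' m, sm m z := (hdecomp z) ▸ hcov z hz
    have hfin : ∑' m, sm m z ≠ ⊤ :=
      ne_top_of_le_ne_top (hatsum ▸ ENNReal.one_ne_top) (ENNReal.tsum_le_tsum hlt)
    have hstrict := ENNReal.tsum_lt_tsum hfin hlt hN
    rw [hatsum] at hstrict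
    exact absurd h1 (not_le.mpr hstrict)
  -- maximal 4ε-separated subsets of the stratum sets
  set Y : ℕ → Set (X 0) := fun m => {z | z ∈ Z ∧ a m ≤ sm m z} with hYdef
  have hzorn : ∀ m, ∃ E, Maximal
      (· ∈ {E : Set (X 0) | E ⊆ Y m ∧ E.Pairwise fun u v => 4 * ε < bowenDist T m u v}) E := by
    intro m
    refine zorn_subset _ fun ch hch hchain => ⟨⋃₀ ch, ⟨?_, ?_⟩, fun s hs => Set.subset_sUnion_of_mem hs⟩
    · exact Set.sUnion_subset fun s hs => (hch hs).1
    · intro u hu v hv huv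
      obtain ⟨su, hsu, hu⟩ := hu
      obtain ⟨sv, hsv, hv⟩ := hv
      rcases hchain.total hsu hsv with h | h
      · exact (hch hsv).2 (h hu) hv huv
      · exact (hch hsu).2 hu (h hv) huv
  choose E hEmax using hzorn
  have hEY : ∀ m, E m ⊆ Y m := fun m => (hEmax m).1.1
  have hEsep : ∀ m, (E m).Pairwise fun u v => 4 * ε < bowenDist T m u v :=
    fun m => (hEmax m).1.2
  -- each point of E m is ε-close to a center of the stratum
  have hpick : ∀ m, ∀ u ∈ E m, ∃ i : {i // n i = m}, bowenDist T m (x i.1) u < ε := by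
    intro m u hu
    have h1 : a m ≤ sm m u := (hEY m hu).2
    have h2 : sm m u ≠ 0 := fun h0 => (ha0 m) (le_antisymm (h0 ▸ h1) (zero_le))
    obtain ⟨i, hi⟩ : ∃ i : {i // n i = m}, g i.1 u ≠ 0 := by
      by_contra hall
      push_neg at hall
      exact h2 ((tsum_congr hall).trans tsum_zero)
    have hmem : u ∈ bowenBall T (n i.1) (x i.1) ε := by
      by_contra hm
      exact hi (Set.indicator_of_notMem hm _)
    refine ⟨i, ?_⟩
    have : bowenDist T (n i.1) (x i.1) u < ε := hmem
    rwa [i.2] at this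
  -- countability of E m
  have hEc : ∀ m, (E m).Countable := by
    intro m
    choose pi hpi using fun u : ↥(E m) => hpick m u.1 u.2
    have hinj : Function.Injective pi := by
      intro u v huv
      by_contra hne0
      have hne : u.1 ≠ v.1 := fun h => hne0 (Subtype.ext h)
      have h4 := hEsep m u.2 v.2 hne
      have hu' := hpi u
      have hv' := hpi v
      rw [← huv] at hv'
      have htri := bowenDist_triangle T m u.1 (x (pi u).1) v.1
      rw [bowenDist_comm T m u.1 (x (pi u).1)] at htri
      linarith
    have : Countable ↥(E m) := hinj.countable
    exact Set.countable_coe_iff.mpr this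
  -- the Bowen cover
  set C : Set (X 0 × ℕ) := {p | p.1 ∈ E p.2} with hCdef
  have hCc : C.Countable := by
    have hsub : C ⊆ ⋃ m, (fun u => (u, m)) '' E m := fun p hp =>
      Set.mem_iUnion.mpr ⟨p.2, ⟨p.1, hp, rfl⟩⟩
    exact Set.Countable.mono hsub (Set.countable_iUnion fun m => (hEc m).image _)
  have hCN : ∀ p ∈ C, N ≤ p.2 := by
    intro p hp
    obtain ⟨i, -⟩ := hpick p.2 p.1 hp
    exact i.2 ▸ hnN i.1
  have hCcov : Z ⊆ ⋃ p ∈ C, bowenBall T p.2 p.1 (6 * ε) := by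
    intro z hz
    obtain ⟨m, hmN, hma⟩ := hex z hz
    have hzY : z ∈ Y m := ⟨hz, hma⟩
    have hclose : ∃ u ∈ E m, bowenDist T m u z ≤ 4 * ε := by
      by_contra hnc
      push_neg at hnc
      have hzE : z ∉ E m := by
        intro h
        have := hnc z h
        rw [bowenDist_self] at this
        linarith
      have hins : insert z (E m) ∈
          {E : Set (X 0) | E ⊆ Y m ∧ E.Pairwise fun u v => 4 * ε < bowenDist T m u v} := by
        refine ⟨Set.insert_subset hzY (hEY m), ?_⟩
        rw [Set.pairwise_insert]
        exact ⟨hEsep m, fun b hb _ => ⟨by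
          rw [bowenDist_comm]; exact hnc b hb, hnc b hb⟩⟩
      have hsub := (hEmax m).2 hins (Set.subset_insert z (E m))
      exact hzE (hsub (Set.mem_insert z (E m)))
    obtain ⟨u, huE, hud⟩ := hclose
    refine Set.mem_iUnion₂.mpr ⟨(u, m), huE, ?_⟩
    show bowenDist T m u z < 6 * ε
    linarith
  have hcover : IsBowenCover T N (6 * ε) Z C := ⟨hCc, hCN, hCcov⟩
  -- the estimate
  set F : ι → ℝ≥0∞ := fun i => ENNReal.ofReal (c i) *
    ENNReal.ofReal (Real.exp (-(n i : ℝ) * s + birk T f (n i) (x i))) with hFdef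
  set Xe : ℕ → X 0 → ℝ≥0∞ :=
    fun m u => ENNReal.ofReal (Real.exp (-(m : ℝ) * (s + δ) + birk T f m u)) with hXedef
  set Wm : ℕ → ℝ≥0∞ := fun m => ∑' i : {i // n i = m}, F i.1 with hWmdef
  -- Step A : ballSum over C splits into strata
  have hA : ballSum T f (s + δ) C = ∑' m, ∑' u : ↥(E m), Xe m u.1 := by
    let eC : (Σ m, ↥(E m)) ≃ ↥C :=
      { toFun := fun p => ⟨(p.2.1, p.1), p.2.2⟩
        invFun := fun q => ⟨q.1.2, q.1.1, q.2⟩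
        left_inv := fun p => rfl
        right_inv := fun q => rfl }
    calc ballSum T f (s + δ) C
        = ∑' p : Σ m, ↥(E m), Xe p.1 p.2.1 := (eC.tsum_eq _).symm
      _ = ∑' m, ∑' u : ↥(E m), Xe m u.1 :=
          ENNReal.tsum_sigma' (fun p : Σ m, ↥(E m) => Xe p.1 p.2.1)
  -- Step B : per-stratum estimate
  have hB : ∀ m, ∑' u : ↥(E m), Xe m u.1 ≤ K * Wm m := by
    intro m
    rcases lt_or_ge m N with hmN | hmN
    · have hempty : IsEmpty ↥(E m) := by
        refine ⟨fun u => ?_⟩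
        have h := (hEY m u.2).2
        rw [hsm0 m hmN u.1] at h
        exact ha0 m (le_zero_iff.mp h)
      rw [tsum_empty]
      exact zero_le
    · -- inner estimate for each i in the stratum
      have hinner : ∀ i : {i // n i = m}, ∑' u : ↥(E m), g i.1 u.1 * Xe m u.1 ≤
          ENNReal.ofReal (Real.exp ((m : ℝ) * (η - δ))) * F i.1 := by
        rintro ⟨i, hi⟩
        subst hi
        show ∑' u : ↥(E (n i)), g i u.1 * Xe (n i) u.1 ≤
          ENNReal.ofReal (Real.exp ((n i : ℝ) * (η - δ))) * F i
        by_cases hex0 : ∃ u : ↥(E (n i)), g i u.1 * Xe (n i) u.1 ≠ 0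
        · obtain ⟨u₀, hu₀⟩ := hex0
          have hmem : ∀ u : ↥(E (n i)), g i u.1 * Xe (n i) u.1 ≠ 0 →
              bowenDist T (n i) (x i) u.1 < ε := by
            intro u hu
            by_contra hm
            have hnm : u.1 ∉ bowenBall T (n i) (x i) ε := hm
            exact hu (by rw [hgdef]; simp only [Set.indicator_of_notMem hnm, zero_mul])
          have huniq : ∀ u : ↥(E (n i)), u ≠ u₀ → g i u.1 * Xe (n i) u.1 = 0 := by
            intro u hne
            by_contra h0
            have h1 := hmem u h0
            have h2 := hmem u₀ hu₀
            have hsep := hEsep (n i) u.2 u₀.2 (fun h => hne (Subtype.ext h))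
            have htri := bowenDist_triangle T (n i) u.1 (x i) u₀.1
            rw [bowenDist_comm T (n i) u.1 (x i)] at htri
            linarith
          rw [tsum_eq_single u₀ huniq]
          have hd := hmem u₀ hu₀
          have hbirk : birk T f (n i) u₀.1 ≤ birk T f (n i) (x i) + (n i) * η :=
            birk_le_birk_add T f hobs hd
          have hgu : g i u₀.1 = ENNReal.ofReal (c i) := by
            have hin : u₀.1 ∈ bowenBall T (n i) (x i) ε := hd
            rw [hgdef]; simp only [Set.indicator_of_mem hin]
          have hXu : Xe (n i) u₀.1 ≤
              ENNReal.ofReal (Real.exp (-(n i : ℝ) * s + birk T f (n i) (x i))) *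
                ENNReal.ofReal (Real.exp ((n i : ℝ) * (η - δ))) := by
            rw [hXedef]
            rw [← ENNReal.ofReal_mul (Real.exp_nonneg _), ← Real.exp_add]
            exact ENNReal.ofReal_le_ofReal (Real.exp_le_exp.mpr (by linarith))
          calc g i u₀.1 * Xe (n i) u₀.1
              ≤ ENNReal.ofReal (c i) *
                (ENNReal.ofReal (Real.exp (-(n i : ℝ) * s + birk T f (n i) (x i))) *
                  ENNReal.ofReal (Real.exp ((n i : ℝ) * (η - δ)))) := by
                rw [hgu]; exact mul_le_mul' le_rfl hXu
            _ = ENNReal.ofReal (Real.exp ((n i : ℝ) * (η - δ))) * F i := by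
                simp only [hFdef]
                ring
        · push_neg at hex0
          rw [tsum_congr hex0, tsum_zero]
          exact zero_le
      have hB1 : a m * ∑' u : ↥(E m), Xe m u.1 ≤
          ENNReal.ofReal (Real.exp ((m : ℝ) * (η - δ))) * Wm m := by
        calc a m * ∑' u : ↥(E m), Xe m u.1
            = ∑' u : ↥(E m), a m * Xe m u.1 := ENNReal.tsum_mul_left.symm
          _ ≤ ∑' u : ↥(E m), sm m u.1 * Xe m u.1 :=
              ENNReal.tsum_le_tsum fun u => mul_le_mul' (hEY m u.2).2 le_rfl
          _ = ∑' u : ↥(E m), ∑' i : {i // n i = m}, g i.1 u.1 * Xe m u.1 := by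
              refine tsum_congr fun u => ?_
              rw [hsmdef]
              exact ENNReal.tsum_mul_right.symm
          _ = ∑' i : {i // n i = m}, ∑' u : ↥(E m), g i.1 u.1 * Xe m u.1 :=
              ENNReal.tsum_comm
          _ ≤ ∑' i : {i // n i = m}, ENNReal.ofReal (Real.exp ((m : ℝ) * (η - δ))) * F i.1 :=
              ENNReal.tsum_le_tsum hinner
          _ = ENNReal.ofReal (Real.exp ((m : ℝ) * (η - δ))) * Wm m := by
              rw [hWmdef, ENNReal.tsum_mul_left]
      have hcmp : ENNReal.ofReal (Real.exp ((m : ℝ) * (η - δ))) * Wm m ≤ a m * (K * Wm m) := by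
        have hak : a m * K = r ^ (m - N) := by
          calc a m * K = ((1 : ℝ≥0∞) - r) * K * r ^ (m - N) := by rw [hadef]; ring
            _ = r ^ (m - N) := by rw [hcancel, one_mul]
        rw [← mul_assoc, hak]
        refine mul_le_mul' ?_ le_rfl
        have hre : r ^ (m - N) = ENNReal.ofReal (Real.exp (-η * ((m - N : ℕ) : ℝ))) := by
          rw [hrdef, ← ENNReal.ofReal_pow (Real.exp_nonneg _), ← Real.exp_nat_mul]
          ring_nf
        rw [hre]
        refine ENNReal.ofReal_le_ofReal (Real.exp_le_exp.mpr ?_)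
        have hcast : ((m - N : ℕ) : ℝ) = (m : ℝ) - (N : ℝ) := by
          rw [Nat.cast_sub hmN]
        rw [hcast, hηdef]
        have hm0 : (0 : ℝ) ≤ (N : ℝ) := Nat.cast_nonneg N
        nlinarith [(Nat.cast_nonneg m : (0:ℝ) ≤ (m:ℝ))]
      exact (ENNReal.mul_le_mul_iff_right (ha0 m) (hatop m)).mp (le_trans hB1 hcmp)
  -- Step C : conclude
  have hWF : ∑' i, F i = ∑' m, Wm m := by
    calc ∑' i, F i = ∑' p : Σ m, {i // n i = m}, F p.2.1 :=
          ((Equiv.sigmaFiberEquiv n).tsum_eq F).symm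
      _ = ∑' m, Wm m := ENNReal.tsum_sigma' (fun p : Σ m, {i // n i = m} => F p.2.1)
  calc bowenPreMeas T f Z (s + δ) N (6 * ε) ≤ ballSum T f (s + δ) C := iInf₂_le C hcover
    _ = ∑' m, ∑' u : ↥(E m), Xe m u.1 := hA
    _ ≤ ∑' m, K * Wm m := ENNReal.tsum_le_tsum hB
    _ = K * ∑' m, Wm m := ENNReal.tsum_mul_left
    _ = K * ∑' i, F i := by rw [hWF]
end Key

section Final

variable {X : ℕ → Type*} [∀ k, MetricSpace (X k)] (T : ∀ k, X k → X (k + 1))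
  (f : ∀ k, X k → ℝ) (Z : Set (X 0))

lemma zero_step (s δ ε : ℝ) (hδ : 0 < δ) (hε : 0 < ε)
    (hobs : ∀ k, ∀ x y : X k, dist x y < ε → |f k x - f k y| ≤ δ / 2)
    (h : wMeas T f Z s ε = 0) : bowenMeas T f Z (s + δ) (6 * ε) = 0 := by
  set K : ℝ≥0∞ := (1 - ENNReal.ofReal (Real.exp (-(δ / 2))))⁻¹ with hKdef
  have hK0 : K ≠ 0 :=
    ENNReal.inv_ne_zero.mpr (ne_top_of_le_ne_top ENNReal.one_ne_top tsub_le_self)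
  have hr1 : ENNReal.ofReal (Real.exp (-(δ / 2))) < 1 := by
    rw [← ENNReal.ofReal_one]
    exact (ENNReal.ofReal_lt_ofReal_iff one_pos).mpr
      (Real.exp_lt_one_iff.mpr (by linarith))
  have hKtop : K ≠ ⊤ := ENNReal.inv_ne_top.mpr (tsub_pos_of_lt hr1).ne'
  have hall : ∀ N, bowenPreMeas T f Z (s + δ) N (6 * ε) = 0 := by
    intro N
    have hpre : wMeasPre T f Z s N ε = 0 :=
      le_antisymm (le_trans (le_iSup (fun N => wMeasPre T f Z s N ε) N) h.le) (zero_le)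
    have hdiv : bowenPreMeas T f Z (s + δ) N (6 * ε) / K ≤ wMeasPre T f Z s N ε := by
      rw [wMeasPre]
      refine le_iInf fun ι => le_iInf fun hcnt => le_iInf fun x => le_iInf fun n =>
        le_iInf fun c => le_iInf fun hwc => ?_
      haveI := hcnt
      have hkey := key_estimate T f Z s δ ε hδ hε hobs N x n c hwc
      rw [ENNReal.div_le_iff_le_mul (Or.inl hK0) (Or.inl hKtop)]
      exact le_trans hkey (le_of_eq (mul_comm _ _))
    rw [hpre] at hdiv
    have h0 := le_antisymm hdiv (zero_le)
    rcases ENNReal.div_eq_zero_iff.mp h0 with h1 | h1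
    · exact h1
    · exact absurd h1 hKtop
  rw [bowenMeas]
  exact le_antisymm (iSup_le fun N => (hall N).le) (zero_le)

lemma PBe_le_PBW_add (δ ε : ℝ) (hδ : 0 < δ) (hε : 0 < ε)
    (hobs : ∀ k, ∀ x y : X k, dist x y < ε → |f k x - f k y| ≤ δ / 2) :
    PBe T f Z (6 * ε) ≤ PBW T f Z ε + (δ : EReal) :=
  crit_shift δ fun s hs => zero_step T f Z s δ ε hδ hε hobs hs

end Final

end NDSAux

/-- For an equicontinuous potential `f`, the Bowen pressure coincides with the
limit as `ε → 0` (a supremum over `ε > 0`, by monotonicity) of the weighted-cover pressures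
`P^{BW}(T,f,Z,ε)`. -/
theorem bowen_pressure_via_weighted_covers {X : ℕ → Type*} [∀ k, MetricSpace (X k)]
    [∀ k, CompactSpace (X k)] (T : ∀ k, X k → X (k + 1)) (hT : ∀ k, Continuous (T k))
    (f : ∀ k, X k → ℝ) (hf : ∀ k, Continuous (f k)) (hfe : NDS.EquicontPotential f)
    (Z : Set (X 0)) :
    NDS.PB T f Z = ⨆ (ε : ℝ) (_ : 0 < ε), NDS.PBW T f Z ε := by
  refine le_antisymm ?_ ?_
  · refine NDSAux.ereal_le_of_forall_add fun d hd => ?_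
    obtain ⟨δ₀, hδ₀, hobs'⟩ := hfe (d / 2) (by linarith)
    rw [NDS.PB]
    refine iSup₂_le fun ε' hε' => ?_
    set ε := min (ε' / 6) δ₀ with hεdef
    have hεpos : 0 < ε := lt_min (by linarith) hδ₀
    have h6 : 6 * ε ≤ ε' := by
      have h1 := min_le_left (ε' / 6) δ₀
      rw [hεdef]
      linarith
    have hobs : ∀ k, ∀ x y : X k, dist x y < ε → |f k x - f k y| ≤ d / 2 := fun k x y h =>
      (hobs' k x y (lt_of_lt_of_le h (min_le_right _ _))).le
    calc NDS.PBe T f Z ε' ≤ NDS.PBe T f Z (6 * ε) := NDSAux.PBe_anti T f Z h6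
      _ ≤ NDS.PBW T f Z ε + (d : EReal) :=
          NDSAux.PBe_le_PBW_add T f Z d ε hd hεpos hobs
      _ ≤ (⨆ (ε : ℝ) (_ : 0 < ε), NDS.PBW T f Z ε) + (d : EReal) :=
          add_le_add (le_iSup₂ (f := fun ε (_ : 0 < ε) => NDS.PBW T f Z ε) ε hεpos) le_rfl
  · refine iSup₂_le fun ε hε => ?_
    calc NDS.PBW T f Z ε ≤ NDS.PBe T f Z ε := NDSAux.PBW_le_PBe T f Z ε
      _ ≤ NDS.PB T f Z := le_iSup₂ (f := fun ε (_ : 0 < ε) => NDS.PBe T f Z ε) ε hε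
end
end
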